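/- arXiv:1410.2772 — 2 statements merged into one kernel-verified Lean document; each statement's English description precedes it below -/
import Mathlib

section
/- Fix an integer n ≥ 2, an integer m ≥ 0, and a sequence of positive integers c = (c_1, …, c_m) with c_1 + ⋯ + c_m ≤ ⌊n/2⌋. Then the map w ↦ δ⁻(w) is a bijection from {w ∈ Ω_n : μ⁻(w) = c} onto the set of all m-tuples of positive integers. -/
open scoped Classical

noncomputable section

/-- The function underlying the simple generator `s_i` of the affine symmetric group. -/
def sFun (n i : ℕ) (j : ℤ) : ℤ :=
  if (n : ℤ) ∣ j - (i : ℤ) then j + 1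
  else if (n : ℤ) ∣ j - ((i : ℤ) + 1) then j - 1
  else j

lemma sFun_invol (n i : ℕ) (h : ¬ (n : ℤ) ∣ 1) : Function.Involutive (sFun n i) := by
  intro j
  unfold sFun
  by_cases h1 : (n : ℤ) ∣ j - (i : ℤ)
  · have h2 : ¬ (n : ℤ) ∣ (j + 1) - (i : ℤ) := by
      intro hd
      have h3 : (n : ℤ) ∣ ((j + 1) - (i : ℤ)) - (j - (i : ℤ)) := dvd_sub hd h1
      have h4 : ((j + 1) - (i : ℤ)) - (j - (i : ℤ)) = 1 := by ring
      rw [h4] at h3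
      exact h h3
    have h3 : (n : ℤ) ∣ (j + 1) - ((i : ℤ) + 1) := by
      have h4 : (j + 1) - ((i : ℤ) + 1) = j - (i : ℤ) := by ring
      rw [h4]
      exact h1
    rw [if_pos h1, if_neg h2, if_pos h3]
    ring
  · by_cases h2 : (n : ℤ) ∣ j - ((i : ℤ) + 1)
    · have h3 : (n : ℤ) ∣ (j - 1) - (i : ℤ) := by
        have h4 : (j - 1) - (i : ℤ) = j - ((i : ℤ) + 1) := by ring
        rw [h4]
        exact h2
      rw [if_neg h1, if_pos h2, if_pos h3]
      ring
    · rw [if_neg h1, if_neg h2, if_neg h1, if_neg h2]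

/-- The simple generator `s_i` of the affine symmetric group `S̃_n`:
`j ↦ j+1` if `j ≡ i (mod n)`, `j ↦ j-1` if `j ≡ i+1 (mod n)`, `j ↦ j` otherwise.
(For the degenerate case `n = 1`, where this recipe does not define a bijection,
we use the identity; all results below assume `n ≥ 2`.) -/
def sGen (n i : ℕ) : Equiv.Perm ℤ :=
  if h : (n : ℤ) ∣ 1 then 1
  else ⟨sFun n i, sFun n i, sFun_invol n i h, sFun_invol n i h⟩

/-- Membership in the affine symmetric group `S̃_n`: a bijection `w : ℤ → ℤ` with
`w (i + n) = w i + n` for all `i` and `∑_{i=1}^n w i = ∑_{i=1}^n i`. -/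
def IsAffinePerm (n : ℕ) (w : Equiv.Perm ℤ) : Prop :=
  (∀ i : ℤ, w (i + (n : ℤ)) = w i + (n : ℤ)) ∧
    ∑ i ∈ Finset.Icc (1 : ℤ) (n : ℤ), w i = ∑ i ∈ Finset.Icc (1 : ℤ) (n : ℤ), i

/-- The length of `w ∈ S̃_n`: the number of pairs `(i, j)` with `i < j`, `1 ≤ j ≤ n`
and `w i > w j`. -/
def ellA (n : ℕ) (w : Equiv.Perm ℤ) : ℕ :=
  Set.ncard {p : ℤ × ℤ | p.1 < p.2 ∧ 1 ≤ p.2 ∧ p.2 ≤ (n : ℤ) ∧ w p.2 < w p.1}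

/-- The absolute length of an involution `w ∈ S̃_n`:
`(n − #{i ∈ {1,…,n} : w i = i}) / 2`. -/
def ellAbs (n : ℕ) (w : Equiv.Perm ℤ) : ℕ :=
  (n - Set.ncard {i : ℤ | 1 ≤ i ∧ i ≤ (n : ℤ) ∧ w i = i}) / 2

/-- `Ω_n`: involutions in `S̃_n` which are minimal length double coset representatives
for the parabolic subgroup generated by `s_1, …, s_{n-1}`. -/
def OmegaSet (n : ℕ) : Set (Equiv.Perm ℤ) :=
  {w | IsAffinePerm n w ∧ w * w = 1 ∧
    ∀ i : ℕ, 1 ≤ i → i ≤ n - 1 →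
      ellA n (sGen n i * w) = ellA n w + 1 ∧ ellA n (w * sGen n i) = ellA n w + 1}

/-- Inverse of a power series with constant term `1` (via `invOfUnit`). -/
def pinv (f : PowerSeries ℤ) : PowerSeries ℤ := PowerSeries.invOfUnit f 1

/-- Substitution of `q ↦ q²` in a power series: `(sq2 f)(q) = f(q²)`. -/
def sq2 (f : PowerSeries ℤ) : PowerSeries ℤ :=
  PowerSeries.mk fun j => if 2 ∣ j then PowerSeries.coeff (j / 2) f else 0

/-- The `q`-integer `[m]_q = 1 + q + ⋯ + q^{m-1}` as a power series. -/
def qInt (m : ℕ) : PowerSeries ℤ := ∑ i ∈ Finset.range m, (PowerSeries.X : PowerSeries ℤ) ^ i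

/-- The `q`-factorial `[m]_q!`. -/
def qFact (m : ℕ) : PowerSeries ℤ := ∏ k ∈ Finset.range m, qInt (k + 1)

/-- The Gaussian binomial coefficient `binom(m, k)_q = [m]_q!/([k]_q![m-k]_q!)`. -/
def qBinom (m k : ℕ) : PowerSeries ℤ := qFact m * pinv (qFact k * qFact (m - k))

/-- The `q`-Pochhammer symbol `(−q^{k+1}; q)_m = ∏_{j=0}^{m-1} (1 + q^{k+1+j})`. -/
def qPochNeg (k m : ℕ) : PowerSeries ℤ :=
  ∏ j ∈ Finset.range m, (1 + (PowerSeries.X : PowerSeries ℤ) ^ (k + 1 + j))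

/-- The Poincaré series `P̃_n(q) = ∑_{w ∈ S̃_n} q^{ℓ(w)}`, defined coefficientwise:
the coefficient of `q^j` is the (finite) number of `w ∈ S̃_n` with `ℓ(w) = j`. -/
def Ptilde (n : ℕ) : PowerSeries ℤ :=
  PowerSeries.mk fun j =>
    (Nat.card {w : Equiv.Perm ℤ // IsAffinePerm n w ∧ ellA n w = j} : ℤ)

/-- The generating set `{s_i : i ∈ K_w}` where
`K_w = {i ∈ {1,…,n−1} : w s_i w ∈ {s_1,…,s_{n−1}}}`. -/
def Kgens (n : ℕ) (w : Equiv.Perm ℤ) : Set (Equiv.Perm ℤ) :=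
  {y | ∃ i : ℕ, 1 ≤ i ∧ i ≤ n - 1 ∧ y = sGen n i ∧
      ∃ j : ℕ, 1 ≤ j ∧ j ≤ n - 1 ∧ w * sGen n i * w = sGen n j}

/-- `F_w(q) = ∑_{x ∈ W_{K_w}, w x w = x} q^{ℓ(x)}`, defined coefficientwise. -/
def Fw (n : ℕ) (w : Equiv.Perm ℤ) : PowerSeries ℤ :=
  PowerSeries.mk fun j =>
    (Nat.card {x : Equiv.Perm ℤ //
        x ∈ Subgroup.closure (Kgens n w) ∧ w * x * w = x ∧ ellA n x = j} : ℤ)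

/-- The `q`-part of the summand of `T_n(s,q)` attached to `w ∈ Ω_n`:
`q^{ℓ(w)} ((1−q)/(1+q))^{ℓ'(w)} P_n(q²) / F_w(q)`. -/
def termW (n : ℕ) (w : Equiv.Perm ℤ) : PowerSeries ℤ :=
  (PowerSeries.X : PowerSeries ℤ) ^ ellA n w *
    ((1 - PowerSeries.X) * pinv (1 + PowerSeries.X)) ^ ellAbs n w *
    sq2 (qFact n) * pinv (Fw n w)

/-- The coefficient of `s^k` in `∑_{w ∈ Ω_n} q^{ℓ(w)} (s(1−q)/(1+q))^{ℓ'(w)} P_n(q²)/F_w(q)`,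
computed coefficientwise in `q` (the sum over `w` converges coefficientwise). -/
def innerSum (n k : ℕ) : PowerSeries ℤ :=
  PowerSeries.mk fun j =>
    ∑' w : {w : Equiv.Perm ℤ // w ∈ OmegaSet n ∧ ellAbs n w = k},
      PowerSeries.coeff j (termW n w.1)

/-- The power series `T_n(s, q) ∈ ℤ[[s, q]]`, realized as an element of `(ℤ[[q]])[[s]]`:
`T_n(s,q) = (P̃_n(q)/P̃_n(q²)) ∑_{w ∈ Ω_n} q^{ℓ(w)} (s(1−q)/(1+q))^{ℓ'(w)} P_n(q²)/F_w(q)`. -/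
def Tser (n : ℕ) : PowerSeries (PowerSeries ℤ) :=
  PowerSeries.mk fun k => Ptilde n * pinv (sq2 (Ptilde n)) * innerSum n k

end

/-- `λ(w) ∈ ℤⁿ`, where `λ_i(w) = ⌊(w(i) − 1)/n⌋` for `i ∈ {1, …, n}`
(indexed here by `i : Fin n`, standing for the position `i + 1`). -/
noncomputable def lam (n : ℕ) (w : Equiv.Perm ℤ) : Fin n → ℤ :=
  fun i => Int.fdiv (w (((i : ℕ) : ℤ) + 1) - 1) (n : ℤ)

/-- The list `(v_1, …, v_m)` of distinct negative values occurring in `λ(w)`, in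
increasing order. -/
noncomputable def negVals (n : ℕ) (w : Equiv.Perm ℤ) : List ℤ :=
  ((Finset.univ.filter fun i : Fin n => lam n w i < 0).image (lam n w)).sort (· ≤ ·)

/-- `μ⁻(w) = (c_1, …, c_m)`: the multiplicities in `λ(w)` of the distinct negative values
`v_1 < ⋯ < v_m`. -/
noncomputable def muNeg (n : ℕ) (w : Equiv.Perm ℤ) : List ℕ :=
  (negVals n w).map fun v => (Finset.univ.filter fun i : Fin n => lam n w i = v).card

/-- `δ⁻(w) = (d_1, …, d_m)` where `d_i = v_{i+1} − v_i` for `i < m` and `d_m = −v_m`: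
the successive differences of `(v_1, …, v_m, 0)`. -/
noncomputable def deltaNeg (n : ℕ) (w : Equiv.Perm ℤ) : List ℤ :=
  ((negVals n w ++ [0]).zip (negVals n w ++ [0]).tail).map fun p : ℤ × ℤ => p.2 - p.1
open scoped Classical

section PartA

variable {n : ℕ}

/-- periodicity property -/
def Per (n : ℕ) (w : Equiv.Perm ℤ) : Prop := ∀ i : ℤ, w (i + (n : ℤ)) = w i + (n : ℤ)

lemma Per.add_mul {w : Equiv.Perm ℤ} (h : Per n w) (x q : ℤ) :
    w (x + (n : ℤ) * q) = w x + (n : ℤ) * q := by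
  induction q using Int.induction_on with
  | zero => simp
  | succ k ih =>
      have : x + (n:ℤ) * (k+1) = (x + n * k) + n := by ring
      rw [this, h, ih]; ring
  | pred k ih =>
      have h2 := h (x + (n:ℤ) * (-k - 1))
      have : x + (n:ℤ) * (-k-1) + n = x + n * (-k) := by ring
      rw [this, ih] at h2
      have : w (x + (n:ℤ) * (-k-1)) = w x + n * (-k) - n := by omega
      rw [this]; ring

lemma Per.inv {w : Equiv.Perm ℤ} (h : Per n w) : Per n w⁻¹ := by
  intro i
  have := h (w⁻¹ i)
  apply w.injective
  simp only [Equiv.Perm.coe_inv, Equiv.apply_symm_apply] at this ⊢; exact this.symm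

lemma Per.mul {u v : Equiv.Perm ℤ} (hu : Per n u) (hv : Per n v) : Per n (u * v) := by
  intro i
  simp only [Equiv.Perm.mul_apply, hv i, hu (v i)]

lemma not_dvd_one (hn : 2 ≤ n) : ¬ ((n : ℤ) ∣ 1) := by
  intro h
  have := Int.le_of_dvd one_pos h
  omega

lemma sGen_coe (hn : 2 ≤ n) (i : ℕ) : ⇑(sGen n i) = sFun n i := by
  unfold sGen
  rw [dif_neg (not_dvd_one hn)]
  rfl

lemma sGen_inv (hn : 2 ≤ n) (i : ℕ) : (sGen n i)⁻¹ = sGen n i := by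
  unfold sGen
  rw [dif_neg (not_dvd_one hn)]
  rfl

lemma sGen_mul_self (hn : 2 ≤ n) (i : ℕ) : sGen n i * sGen n i = 1 := by
  ext j
  simp only [Equiv.Perm.mul_apply, sGen_coe hn, Equiv.Perm.one_apply]
  exact sFun_invol n i (not_dvd_one hn) j

lemma sFun_of_dvd {i : ℕ} {j : ℤ} (h : (n:ℤ) ∣ j - (i:ℤ)) : sFun n i j = j + 1 := by
  unfold sFun; rw [if_pos h]

lemma sFun_of_dvd' (hn : 2 ≤ n) {i : ℕ} {j : ℤ} (h : (n:ℤ) ∣ j - ((i:ℤ)+1)) :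
    sFun n i j = j - 1 := by
  unfold sFun
  have h1 : ¬ (n:ℤ) ∣ j - (i:ℤ) := by
    intro h2
    have : (n:ℤ) ∣ 1 := by
      have := dvd_sub h2 h
      simpa using this
    exact not_dvd_one hn this
  rw [if_neg h1, if_pos h]

lemma sFun_of_not {i : ℕ} {j : ℤ} (h1 : ¬ (n:ℤ) ∣ j - (i:ℤ)) (h2 : ¬ (n:ℤ) ∣ j - ((i:ℤ)+1)) :
    sFun n i j = j := by
  unfold sFun; rw [if_neg h1, if_neg h2]

lemma per_sGen (hn : 2 ≤ n) (i : ℕ) : Per n (sGen n i) := by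
  intro j
  simp only [sGen_coe hn]
  by_cases h1 : (n:ℤ) ∣ j - (i:ℤ)
  · have h1' : (n:ℤ) ∣ (j + n) - (i:ℤ) := by
      have : (j + (n:ℤ)) - i = (j - i) + n := by ring
      rw [this]; exact dvd_add h1 dvd_rfl
    rw [sFun_of_dvd h1, sFun_of_dvd h1']; ring
  · by_cases h2 : (n:ℤ) ∣ j - ((i:ℤ)+1)
    · have h2' : (n:ℤ) ∣ (j + n) - ((i:ℤ)+1) := by
        have : (j + (n:ℤ)) - (i+1) = (j - (i+1)) + n := by ring
        rw [this]; exact dvd_add h2 dvd_rfl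
      rw [sFun_of_dvd' hn h2, sFun_of_dvd' hn h2']; ring
    · have h1' : ¬ (n:ℤ) ∣ (j + n) - (i:ℤ) := by
        intro h
        apply h1
        have : j - (i:ℤ) = ((j+n) - i) - n := by ring
        rw [this]; exact dvd_sub h dvd_rfl
      have h2' : ¬ (n:ℤ) ∣ (j + n) - ((i:ℤ)+1) := by
        intro h
        apply h2
        have : j - ((i:ℤ)+1) = ((j+n) - (i+1)) - n := by ring
        rw [this]; exact dvd_sub h dvd_rfl
      rw [sFun_of_not h1 h2, sFun_of_not h1' h2']

lemma dvd_small_eq {N a : ℤ} (h : N ∣ a) (h1 : -N < a) (h2 : a < N) : a = 0 := by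
  obtain ⟨k, rfl⟩ := h
  rcases lt_trichotomy k 0 with hk | hk | hk
  · nlinarith
  · simp [hk]
  · nlinarith

/-- inversion set -/
def InvSet (n : ℕ) (w : Equiv.Perm ℤ) : Set (ℤ × ℤ) :=
  {p | p.1 < p.2 ∧ 1 ≤ p.2 ∧ p.2 ≤ (n : ℤ) ∧ w p.2 < w p.1}

lemma ellA_eq (n : ℕ) (w : Equiv.Perm ℤ) : ellA n w = (InvSet n w).ncard := rfl

lemma repA_spec (hn : 2 ≤ n) (a : ℤ) :
    1 ≤ a - (n:ℤ) * ((a-1)/n) ∧ a - (n:ℤ) * ((a-1)/n) ≤ n := by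
  have hn0 : (n:ℤ) ≠ 0 := by positivity
  have h1 : 0 ≤ (a-1) % n := Int.emod_nonneg _ hn0
  have h2 : (a-1) % n < n := Int.emod_lt_of_pos _ (by positivity)
  have h3 : (a-1) % n = (a-1) - n * ((a-1)/n) := by rw [Int.emod_def]
  omega

lemma invSet_finite (hn : 2 ≤ n) {w : Equiv.Perm ℤ} (hw : Per n w) : (InvSet n w).Finite := by
  have hne : (Finset.Icc (1:ℤ) (n:ℤ)).Nonempty := by
    rw [Finset.nonempty_Icc]; exact_mod_cast Nat.one_le_iff_ne_zero.mpr (by omega)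
  set m0 := (Finset.Icc (1:ℤ) (n:ℤ)).inf' hne w with hm0
  set M0 := (Finset.Icc (1:ℤ) (n:ℤ)).sup' hne w with hM0
  apply Set.Finite.subset ((Set.finite_Icc (m0 - M0 + 2) (n:ℤ)).prod (Set.finite_Icc 1 (n:ℤ)))
  rintro ⟨a, b⟩ ⟨hab, hb1, hb2, hwba⟩
  dsimp only at hab hb1 hb2 hwba
  have hbmem : b ∈ Finset.Icc (1:ℤ) (n:ℤ) := Finset.mem_Icc.mpr ⟨hb1, hb2⟩
  have hwb : m0 ≤ w b := Finset.inf'_le _ hbmem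
  set q : ℤ := (a-1)/n with hq
  set r : ℤ := a - n * q with hr
  have hrmem : 1 ≤ r ∧ r ≤ n := repA_spec hn a
  have hwa : w a = w r + n * q := by
    have : a = r + (n:ℤ) * q := by rw [hr]; ring
    rw [this, hw.add_mul]
  have hwr : w r ≤ M0 := Finset.le_sup' _ (Finset.mem_Icc.mpr hrmem)
  constructor
  · simp only [Set.mem_Icc]
    constructor
    · -- a ≥ m0 - M0 + 2
      have : m0 < w r + n * q := by omega
      have hq' : m0 - M0 + 1 ≤ (n:ℤ) * q := by omega
      omega
    · omega
  · simp only [Set.mem_Icc]; exact ⟨hb1, hb2⟩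

lemma ncard_eq_of_maps {α β : Type*} {A : Set α} {B : Set β} (f : α → β) (g : β → α)
    (hf : ∀ p ∈ A, f p ∈ B) (hg : ∀ p ∈ B, g p ∈ A)
    (hgf : ∀ p ∈ A, g (f p) = p) (hfg : ∀ p ∈ B, f (g p) = p) : A.ncard = B.ncard := by
  have h1 : Set.InjOn f A := fun x hx y hy hxy => by rw [← hgf x hx, ← hgf y hy, hxy]
  have himg : f '' A = B := by
    apply subset_antisymm
    · rintro _ ⟨p, hp, rfl⟩; exact hf p hp
    · intro q hq; exact ⟨g q, hg q hq, hfg q hq⟩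
  rw [← himg, Set.ncard_image_of_injOn h1]

/-- map realizing ℓ(w) = ℓ(w⁻¹) -/
def invMap (n : ℕ) (w : Equiv.Perm ℤ) (p : ℤ × ℤ) : ℤ × ℤ :=
  (w p.2 - (n:ℤ) * ((w p.1 - 1)/n), w p.1 - (n:ℤ) * ((w p.1 - 1)/n))

lemma invMap_spec (hn : 2 ≤ n) {w : Equiv.Perm ℤ} (hw : Per n w) :
    ∀ p ∈ InvSet n w, invMap n w p ∈ InvSet n w⁻¹ ∧ invMap n w⁻¹ (invMap n w p) = p := by
  rintro ⟨a, b⟩ ⟨hab, hb1, hb2, hwba⟩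
  dsimp only at hab hb1 hb2 hwba
  set t : ℤ := (w a - 1)/n with ht
  have hrep := repA_spec hn (w a)
  have hinva : w⁻¹ (w a - (n:ℤ) * t) = a - n * t := by
    have : w a - (n:ℤ)*t = w a + n * (-t) := by ring
    rw [this, hw.inv.add_mul, Equiv.Perm.coe_inv, Equiv.symm_apply_apply]; ring
  have hinvb : w⁻¹ (w b - (n:ℤ) * t) = b - n * t := by
    have : w b - (n:ℤ)*t = w b + n * (-t) := by ring
    rw [this, hw.inv.add_mul, Equiv.Perm.coe_inv, Equiv.symm_apply_apply]; ring
  constructor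
  · refine ⟨?_, ?_, ?_, ?_⟩
    · simp only [invMap]; omega
    · simp only [invMap]; exact hrep.1
    · simp only [invMap]; exact hrep.2
    · simp only [invMap]
      rw [hinva, hinvb]; omega
  · simp only [invMap]
    rw [hinva, hinvb]
    have hn0 : (n:ℤ) ≠ 0 := by positivity
    have ht' : (b - (n:ℤ)*t - 1)/n = -t := by
      have h1 : b - (n:ℤ)*t - 1 = (b - 1) + (-t) * n := by ring
      rw [h1, Int.add_mul_ediv_right _ _ hn0, Int.ediv_eq_zero_of_lt (by omega) (by omega)]
      ring
    rw [ht', mul_neg]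
    rw [Prod.mk.injEq]
    constructor <;> ring

lemma ellA_inv (hn : 2 ≤ n) {w : Equiv.Perm ℤ} (hw : Per n w) : ellA n w⁻¹ = ellA n w := by
  rw [ellA_eq, ellA_eq]
  refine (ncard_eq_of_maps (invMap n w) (invMap n w⁻¹) ?_ ?_ ?_ ?_).symm
  · intro p hp; exact ((invMap_spec hn hw) p hp).1
  · intro p hp
    have := ((invMap_spec hn hw.inv) p hp).1
    rwa [inv_inv] at this
  · intro p hp; exact ((invMap_spec hn hw) p hp).2
  · intro p hp
    have := ((invMap_spec hn hw.inv) p hp).2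
    rwa [inv_inv] at this

end PartA
section PartA2

variable {n : ℕ}

lemma cast_bounds {i : ℕ} (hn : 2 ≤ n) (hi1 : 1 ≤ i) (hi2 : i ≤ n - 1) :
    (1:ℤ) ≤ (i:ℤ) ∧ (i:ℤ) + 1 ≤ (n:ℤ) := by
  have : i + 1 ≤ n := by omega
  constructor <;> [exact_mod_cast hi1; exact_mod_cast this]

lemma sGen_at_I (hn : 2 ≤ n) (i : ℕ) : sGen n i (i:ℤ) = (i:ℤ) + 1 := by
  rw [sGen_coe hn, sFun_of_dvd (by simp)]

lemma sGen_at_I1 (hn : 2 ≤ n) (i : ℕ) : sGen n i ((i:ℤ) + 1) = (i:ℤ) := by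
  rw [sGen_coe hn, sFun_of_dvd' hn (by simp)]
  ring

lemma sGen_sGen (hn : 2 ≤ n) (i : ℕ) (x : ℤ) : sGen n i (sGen n i x) = x := by
  simp only [sGen_coe hn]
  exact sFun_invol n i (not_dvd_one hn) x

lemma sGen_window (hn : 2 ≤ n) {i : ℕ} (hi1 : 1 ≤ i) (hi2 : i ≤ n - 1) {x : ℤ}
    (hx : 1 ≤ x) (hx' : x ≤ n) : 1 ≤ sGen n i x ∧ sGen n i x ≤ n := by
  obtain ⟨hI1, hI2⟩ := cast_bounds hn hi1 hi2
  rw [sGen_coe hn]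
  by_cases h1 : (n:ℤ) ∣ x - (i:ℤ)
  · have hx0 : x = (i:ℤ) := by
      have := dvd_small_eq h1 (by omega) (by omega)
      omega
    rw [sFun_of_dvd h1]; omega
  · by_cases h2 : (n:ℤ) ∣ x - ((i:ℤ)+1)
    · have hx0 : x = (i:ℤ) + 1 := by
        have := dvd_small_eq h2 (by omega) (by omega)
        omega
      rw [sFun_of_dvd' hn h2]; omega
    · rw [sFun_of_not h1 h2]; omega

lemma sGen_lt (hn : 2 ≤ n) {i : ℕ} {a b : ℤ} (hab : a < b)
    (h : ¬ ((n:ℤ) ∣ a - (i:ℤ) ∧ b = a + 1)) : sGen n i a < sGen n i b := by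
  have hn' : (2:ℤ) ≤ (n:ℤ) := by exact_mod_cast hn
  rw [sGen_coe hn]
  by_cases da1 : (n:ℤ) ∣ a - (i:ℤ)
  · rw [sFun_of_dvd da1]
    by_cases db1 : (n:ℤ) ∣ b - (i:ℤ)
    · rw [sFun_of_dvd db1]; omega
    · by_cases db2 : (n:ℤ) ∣ b - ((i:ℤ)+1)
      · rw [sFun_of_dvd' hn db2]
        have hne : b ≠ a + 1 := fun hb => h ⟨da1, hb⟩
        have hd : (n:ℤ) ∣ (b - a - 1) := by
          have : b - a - 1 = (b - ((i:ℤ)+1)) - (a - i) := by ring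
          rw [this]; exact dvd_sub db2 da1
        have : (n:ℤ) ≤ b - a - 1 := Int.le_of_dvd (by omega) hd
        omega
      · rw [sFun_of_not db1 db2]
        -- if b = a + 1 then b - (i+1) = a - i divisible, contra db2
        have hne : b ≠ a + 1 := by
          intro hb
          apply db2
          have : b - ((i:ℤ)+1) = a - (i:ℤ) := by omega
          rw [this]; exact da1
        omega
  · by_cases da2 : (n:ℤ) ∣ a - ((i:ℤ)+1)
    · rw [sFun_of_dvd' hn da2]
      rcases (by unfold sFun; split_ifs <;> omega :
        sFun n i b = b + 1 ∨ sFun n i b = b - 1 ∨ sFun n i b = b) with hb | hb | hb <;>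
        (unfold sFun at hb ⊢; omega)
    · rw [sFun_of_not da1 da2]
      by_cases db1 : (n:ℤ) ∣ b - (i:ℤ)
      · rw [sFun_of_dvd db1]; omega
      · by_cases db2 : (n:ℤ) ∣ b - ((i:ℤ)+1)
        · rw [sFun_of_dvd' hn db2]
          have hne : b ≠ a + 1 := by
            intro hb
            apply da1
            have : a - (i:ℤ) = b - ((i:ℤ)+1) := by omega
            rw [this]; exact db2
          omega
        · rw [sFun_of_not db1 db2]; omega

lemma mapsPunct (hn : 2 ≤ n) {i : ℕ} (hi1 : 1 ≤ i) (hi2 : i ≤ n - 1) (w : Equiv.Perm ℤ) :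
    ∀ p ∈ InvSet n (w * sGen n i) \ {((i:ℤ), (i:ℤ)+1)},
      (sGen n i p.1, sGen n i p.2) ∈ InvSet n w \ {((i:ℤ), (i:ℤ)+1)} := by
  obtain ⟨hI1, hI2⟩ := cast_bounds hn hi1 hi2
  rintro ⟨a, b⟩ ⟨⟨hab, hb1, hb2, hv⟩, hne⟩
  dsimp only at hab hb1 hb2 hv
  simp only [Set.mem_singleton_iff, Prod.mk.injEq, not_and] at hne
  have hlt : sGen n i a < sGen n i b := by
    apply sGen_lt hn hab
    rintro ⟨hd, hb'⟩
    have ha0 : a = (i:ℤ) := by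
      have := dvd_small_eq hd (by omega) (by omega)
      omega
    exact hne ha0 (by omega)
  constructor
  · refine ⟨hlt, (sGen_window hn hi1 hi2 hb1 hb2).1, (sGen_window hn hi1 hi2 hb1 hb2).2, ?_⟩
    simpa only [Equiv.Perm.mul_apply] using hv
  · simp only [Set.mem_singleton_iff, Prod.mk.injEq, not_and]
    intro h1 h2
    have ha : a = sGen n i (i:ℤ) := by rw [← h1, sGen_sGen hn]
    have hb : b = sGen n i ((i:ℤ)+1) := by rw [← h2, sGen_sGen hn]
    rw [sGen_at_I hn] at ha
    rw [sGen_at_I1 hn] at hb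
    omega

lemma ellA_mul_sGen (hn : 2 ≤ n) {w : Equiv.Perm ℤ} (hw : Per n w) {i : ℕ}
    (hi1 : 1 ≤ i) (hi2 : i ≤ n - 1) :
    (w (i:ℤ) < w ((i:ℤ)+1) → ellA n (w * sGen n i) = ellA n w + 1) ∧
    (w ((i:ℤ)+1) < w (i:ℤ) → ellA n w = ellA n (w * sGen n i) + 1) := by
  obtain ⟨hI1, hI2⟩ := cast_bounds hn hi1 hi2
  set s := sGen n i with hs
  have hws : Per n (w * s) := hw.mul (per_sGen hn i)
  have hfin1 : (InvSet n (w * s)).Finite := invSet_finite hn hws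
  have hfin2 : (InvSet n w).Finite := invSet_finite hn hw
  have hwss : (w * s) * s = w := by
    rw [mul_assoc, sGen_mul_self hn, mul_one]
  have hpunct : ((InvSet n (w * s)) \ {((i:ℤ), (i:ℤ)+1)}).ncard
      = ((InvSet n w) \ {((i:ℤ), (i:ℤ)+1)}).ncard := by
    apply ncard_eq_of_maps (fun p : ℤ × ℤ => (s p.1, s p.2)) (fun p : ℤ × ℤ => (s p.1, s p.2))
    · exact mapsPunct hn hi1 hi2 w
    · intro p hp
      have := mapsPunct hn hi1 hi2 (w * s) p (by rwa [hwss])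
      exact this
    · intro p _; simp only [hs, sGen_sGen hn]
    · intro p _; simp only [hs, sGen_sGen hn]
  have hmem1 : (((i:ℤ), (i:ℤ)+1) ∈ InvSet n (w * s)) ↔ w (i:ℤ) < w ((i:ℤ)+1) := by
    simp only [InvSet, Set.mem_setOf_eq, Equiv.Perm.mul_apply]
    rw [hs, sGen_at_I hn, sGen_at_I1 hn]
    constructor
    · rintro ⟨-, -, -, h⟩; exact h
    · intro h; exact ⟨by omega, by omega, by omega, h⟩
  have hmem2 : (((i:ℤ), (i:ℤ)+1) ∈ InvSet n w) ↔ w ((i:ℤ)+1) < w (i:ℤ) := by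
    simp only [InvSet, Set.mem_setOf_eq]
    constructor
    · rintro ⟨-, -, -, h⟩; exact h
    · intro h; exact ⟨by omega, by omega, by omega, h⟩
  constructor
  · intro h
    have h1 : (((i:ℤ), (i:ℤ)+1)) ∈ InvSet n (w * s) := hmem1.mpr h
    have h2 : (((i:ℤ), (i:ℤ)+1)) ∉ InvSet n w := by rw [hmem2]; omega
    have e1 := Set.ncard_diff_singleton_add_one h1 hfin1
    have e2 : InvSet n w \ {((i:ℤ), (i:ℤ)+1)} = InvSet n w := Set.diff_singleton_eq_self h2
    rw [ellA_eq, ellA_eq, ← e1, hpunct, e2]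
  · intro h
    have h1 : (((i:ℤ), (i:ℤ)+1)) ∈ InvSet n w := hmem2.mpr h
    have h2 : (((i:ℤ), (i:ℤ)+1)) ∉ InvSet n (w * s) := by rw [hmem1]; omega
    have e1 := Set.ncard_diff_singleton_add_one h1 hfin2
    have e2 : InvSet n (w * s) \ {((i:ℤ), (i:ℤ)+1)} = InvSet n (w * s) :=
      Set.diff_singleton_eq_self h2
    rw [ellA_eq, ellA_eq, ← e1, ← hpunct, e2]

/-- Characterization of `Ω_n` -/
lemma omega_iff (hn : 2 ≤ n) (w : Equiv.Perm ℤ) :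
    w ∈ OmegaSet n ↔ IsAffinePerm n w ∧ w * w = 1 ∧
      ∀ i : ℕ, 1 ≤ i → i ≤ n - 1 → w (i:ℤ) < w ((i:ℤ)+1) := by
  constructor
  · rintro ⟨haff, hinv, hlen⟩
    refine ⟨haff, hinv, ?_⟩
    intro i hi1 hi2
    have hw : Per n w := haff.1
    rcases lt_trichotomy (w (i:ℤ)) (w ((i:ℤ)+1)) with h | h | h
    · exact h
    · exact absurd (w.injective h) (by omega)
    · exfalso
      have hd := (ellA_mul_sGen hn hw hi1 hi2).2 h
      have := (hlen i hi1 hi2).2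
      omega
  · rintro ⟨haff, hinv, hmono⟩
    refine ⟨haff, hinv, ?_⟩
    intro i hi1 hi2
    have hw : Per n w := haff.1
    have hright : ellA n (w * sGen n i) = ellA n w + 1 :=
      (ellA_mul_sGen hn hw hi1 hi2).1 (hmono i hi1 hi2)
    have hwinv : w⁻¹ = w := inv_eq_of_mul_eq_one_right hinv
    have hleft : sGen n i * w = (w * sGen n i)⁻¹ := by
      rw [mul_inv_rev, sGen_inv hn, hwinv]
    refine ⟨?_, hright⟩
    rw [hleft, ellA_inv hn (hw.mul (per_sGen hn i)), hright]

end PartA2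
section PartB1

variable {n : ℕ}

/-- count of indices with value < v -/
def cntLt (n : ℕ) (lm : Fin n → ℤ) (v : ℤ) : ℕ :=
  (Finset.univ.filter fun j => lm j < v).card

def cntLe (n : ℕ) (lm : Fin n → ℤ) (v : ℤ) : ℕ :=
  (Finset.univ.filter fun j => lm j ≤ v).card

lemma cntLt_le_n (lm : Fin n → ℤ) (v : ℤ) : cntLt n lm v ≤ n := by
  have := Finset.card_filter_le (Finset.univ : Finset (Fin n)) (fun j => lm j < v)
  simpa [cntLt] using this

lemma cntLe_le_n (lm : Fin n → ℤ) (v : ℤ) : cntLe n lm v ≤ n := by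
  have := Finset.card_filter_le (Finset.univ : Finset (Fin n)) (fun j => lm j ≤ v)
  simpa [cntLe] using this

lemma lt_cntLt_iff {lm : Fin n → ℤ} (hmono : Monotone lm) (v : ℤ) (j : Fin n) :
    lm j < v ↔ (j : ℕ) < cntLt n lm v := by
  constructor
  · intro h
    have hsub : Finset.Iic j ⊆ Finset.univ.filter fun k => lm k < v := by
      intro k hk
      simp only [Finset.mem_Iic] at hk
      simp only [Finset.mem_filter, Finset.mem_univ, true_and]
      exact lt_of_le_of_lt (hmono hk) h
    have := Finset.card_le_card hsub
    rw [Fin.card_Iic] at this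
    unfold cntLt
    omega
  · intro h
    by_contra hc
    push_neg at hc
    have hsub : (Finset.univ.filter fun k => lm k < v) ⊆ Finset.Iio j := by
      intro k hk
      simp only [Finset.mem_filter, Finset.mem_univ, true_and] at hk
      simp only [Finset.mem_Iio]
      by_contra hk2
      push_neg at hk2
      exact absurd (lt_of_le_of_lt (le_trans hc (hmono hk2)) hk) (lt_irrefl _)
    have := Finset.card_le_card hsub
    rw [Fin.card_Iio] at this
    unfold cntLt at h
    omega

lemma le_cntLe_iff {lm : Fin n → ℤ} (hmono : Monotone lm) (v : ℤ) (j : Fin n) :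
    lm j ≤ v ↔ (j : ℕ) < cntLe n lm v := by
  constructor
  · intro h
    have hsub : Finset.Iic j ⊆ Finset.univ.filter fun k => lm k ≤ v := by
      intro k hk
      simp only [Finset.mem_Iic] at hk
      simp only [Finset.mem_filter, Finset.mem_univ, true_and]
      exact le_trans (hmono hk) h
    have := Finset.card_le_card hsub
    rw [Fin.card_Iic] at this
    unfold cntLe
    omega
  · intro h
    by_contra hc
    push_neg at hc
    have hsub : (Finset.univ.filter fun k => lm k ≤ v) ⊆ Finset.Iio j := by
      intro k hk
      simp only [Finset.mem_filter, Finset.mem_univ, true_and] at hk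
      simp only [Finset.mem_Iio]
      by_contra hk2
      push_neg at hk2
      exact absurd (lt_of_lt_of_le hc (le_trans (hmono hk2) hk)) (lt_irrefl _)
    have := Finset.card_le_card hsub
    rw [Fin.card_Iio] at this
    unfold cntLe at h
    omega

def revF (n : ℕ) (i : Fin n) : Fin n := ⟨n - 1 - (i : ℕ), by omega⟩

lemma revF_val (i : Fin n) : ((revF n i : Fin n) : ℕ) = n - 1 - (i : ℕ) := rfl

/-- count symmetry from an involution negating values -/
lemma cnt_sym {lm : Fin n → ℤ} (σ : Fin n → Fin n)
    (hinv : ∀ i, σ (σ i) = i) (hneg : ∀ i, lm (σ i) = - lm i) (v : ℤ) :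
    cntLt n lm (-v) = n - cntLe n lm v ∧ cntLe n lm (-v) = n - cntLt n lm v := by
  have h1 : cntLt n lm (-v) = (Finset.univ.filter fun j => v < lm j).card := by
    unfold cntLt
    apply Finset.card_bij' (fun j _ => σ j) (fun j _ => σ j)
    · intro j hj
      simp only [Finset.mem_filter, Finset.mem_univ, true_and] at hj ⊢
      rw [hneg]; omega
    · intro j hj
      simp only [Finset.mem_filter, Finset.mem_univ, true_and] at hj ⊢
      rw [hneg]; omega
    · intro j _; exact hinv j
    · intro j _; exact hinv j
  have h2 : cntLe n lm (-v) = (Finset.univ.filter fun j => v ≤ lm j).card := by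
    unfold cntLe
    apply Finset.card_bij' (fun j _ => σ j) (fun j _ => σ j)
    · intro j hj
      simp only [Finset.mem_filter, Finset.mem_univ, true_and] at hj ⊢
      rw [hneg]; omega
    · intro j hj
      simp only [Finset.mem_filter, Finset.mem_univ, true_and] at hj ⊢
      rw [hneg]; omega
    · intro j _; exact hinv j
    · intro j _; exact hinv j
  have h3 : (Finset.univ.filter fun j => v < lm j).card = n - cntLe n lm v := by
    have : (Finset.univ.filter fun j => v < lm j)
        = (Finset.univ.filter fun j => ¬ (lm j ≤ v)) := by
      apply Finset.filter_congr
      intro j _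
      simp [not_le]
    rw [this, Finset.filter_not, Finset.card_sdiff_of_subset (Finset.filter_subset _ _)]
    simp [cntLe]
  have h4 : (Finset.univ.filter fun j => v ≤ lm j).card = n - cntLt n lm v := by
    have : (Finset.univ.filter fun j => v ≤ lm j)
        = (Finset.univ.filter fun j => ¬ (lm j < v)) := by
      apply Finset.filter_congr
      intro j _
      simp [not_lt]
    rw [this, Finset.filter_not, Finset.card_sdiff_of_subset (Finset.filter_subset _ _)]
    simp [cntLt]
  exact ⟨h1.trans h3, h2.trans h4⟩

lemma antisym_of_sigma {lm : Fin n → ℤ} (hmono : Monotone lm) (σ : Fin n → Fin n)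
    (hinv : ∀ i, σ (σ i) = i) (hneg : ∀ i, lm (σ i) = - lm i) :
    ∀ i, lm i + lm (revF n i) = 0 := by
  intro i
  set v := lm i with hv
  have h1 : (i : ℕ) < cntLe n lm v := (le_cntLe_iff hmono v i).mp le_rfl
  have h2 : ¬ ((i : ℕ) < cntLt n lm v) := by
    rw [← lt_cntLt_iff hmono v i]; omega
  have hs := cnt_sym σ hinv hneg v
  have hin : (i : ℕ) < n := i.isLt
  have hub : lm (revF n i) ≤ -v := by
    rw [le_cntLe_iff hmono (-v) (revF n i), hs.2, revF_val]
    have := cntLt_le_n lm v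
    omega
  have hlb : - v ≤ lm (revF n i) := by
    by_contra hc
    push_neg at hc
    rw [lt_cntLt_iff hmono (-v) (revF n i), hs.1, revF_val] at hc
    have := cntLe_le_n lm v
    omega
  omega

/-- monotone from adjacent -/
lemma monotone_of_adj {f : Fin n → ℤ}
    (h : ∀ k : ℕ, (hk : k + 1 < n) → f ⟨k, by omega⟩ ≤ f ⟨k + 1, hk⟩) : Monotone f := by
  have key : ∀ b (hb : b < n) a (ha : a ≤ b), f ⟨a, by omega⟩ ≤ f ⟨b, hb⟩ := by
    intro b
    induction b with
    | zero => intro hb a ha; have : a = 0 := by omega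
              subst this; exact le_rfl
    | succ b ih =>
        intro hb a ha
        rcases Nat.lt_or_ge a (b+1) with h1 | h1
        · exact le_trans (ih (by omega) a (by omega)) (h b hb)
        · have : a = b + 1 := by omega
          subst this; exact le_rfl
  intro a b hab
  have := key (b : ℕ) b.isLt (a : ℕ) hab
  simpa using this

lemma strictmono_of_adj {f : Fin n → ℤ}
    (h : ∀ k : ℕ, (hk : k + 1 < n) → f ⟨k, by omega⟩ < f ⟨k + 1, hk⟩) : StrictMono f := by
  have key : ∀ b (hb : b < n) a (ha : a < b), f ⟨a, by omega⟩ < f ⟨b, hb⟩ := by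
    intro b
    induction b with
    | zero => intro hb a ha; omega
    | succ b ih =>
        intro hb a ha
        rcases Nat.lt_or_ge a b with h1 | h1
        · exact lt_trans (ih (by omega) a (by omega)) (h b hb)
        · have : a = b := by omega
          subst this; exact h a hb
  intro a b hab
  have := key (b : ℕ) b.isLt (a : ℕ) hab
  simpa using this

/-- index in `Fin n` of the window representative of `j` -/
def idxF (n : ℕ) (hn : 0 < n) (j : ℤ) : Fin n :=
  ⟨((j - 1) % (n : ℤ)).toNat, by
    have h0 : (0:ℤ) < (n:ℤ) := by exact_mod_cast hn
    have h1 : 0 ≤ (j-1) % (n:ℤ) := Int.emod_nonneg _ (by omega)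
    have h2 : (j-1) % (n:ℤ) < n := Int.emod_lt_of_pos _ h0
    omega⟩

lemma idxF_val (hn : 0 < n) (j : ℤ) : ((idxF n hn j : ℕ) : ℤ) = (j - 1) % (n : ℤ) := by
  unfold idxF
  have h0 : (0:ℤ) < (n:ℤ) := by exact_mod_cast hn
  have h1 : 0 ≤ (j-1) % (n:ℤ) := Int.emod_nonneg _ (by omega)
  simp [Int.toNat_of_nonneg h1]

lemma idxF_decomp (hn : 0 < n) (j : ℤ) :
    j = ((idxF n hn j : ℕ) : ℤ) + 1 + (n : ℤ) * ((j - 1) / (n : ℤ)) := by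
  rw [idxF_val hn j]
  have := Int.mul_ediv_add_emod (j-1) (n:ℤ)
  omega

lemma idxF_of_fin (hn : 0 < n) (i : Fin n) : idxF n hn ((i : ℕ) + 1 : ℤ) = i := by
  apply Fin.ext
  have h0 : (0:ℤ) < (n:ℤ) := by exact_mod_cast hn
  have : (((i:ℕ):ℤ) + 1 - 1) % (n:ℤ) = ((i:ℕ):ℤ) := by
    rw [add_sub_cancel_right]
    apply Int.emod_eq_of_lt (by positivity)
    exact_mod_cast i.isLt
  have h2 := idxF_val hn ((i:ℕ) + 1 : ℤ)
  rw [this] at h2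
  exact_mod_cast h2

lemma idxF_add_mul (hn : 0 < n) (j q : ℤ) : idxF n hn (j + (n:ℤ) * q) = idxF n hn j := by
  apply Fin.ext
  have h2 := idxF_val hn (j + (n:ℤ)*q)
  have h3 := idxF_val hn j
  have : (j + (n:ℤ)*q - 1) % (n:ℤ) = (j - 1) % (n:ℤ) := by
    have : j + (n:ℤ)*q - 1 = (j - 1) + (n:ℤ)*q := by ring
    rw [this, Int.add_mul_emod_self_left]
  omega

end PartB1
section PartB2

variable {n : ℕ}

lemma lam_eq_ediv (hn : 0 < n) (w : Equiv.Perm ℤ) (i : Fin n) :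
    lam n w i = (w (((i:ℕ):ℤ) + 1) - 1) / (n:ℤ) := by
  unfold lam
  exact Int.fdiv_eq_ediv_of_nonneg _ (by positivity)

lemma omega_unpack (hn : 2 ≤ n) {w : Equiv.Perm ℤ} (hw : w ∈ OmegaSet n) :
    Per n w ∧ (∀ x, w (w x) = x) ∧
      (∀ i : ℕ, 1 ≤ i → i ≤ n - 1 → w (i:ℤ) < w ((i:ℤ)+1)) := by
  rw [omega_iff hn] at hw
  obtain ⟨haff, hinv, hadj⟩ := hw
  refine ⟨haff.1, fun x => ?_, hadj⟩
  have := DFunLike.congr_fun hinv x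
  simpa using this

lemma omega_adj (hn : 2 ≤ n) {w : Equiv.Perm ℤ} (hw : w ∈ OmegaSet n)
    (k : ℕ) (hk : k + 1 < n) :
    w (((k:ℕ):ℤ) + 1) < w (((k+1:ℕ):ℤ) + 1) := by
  have hadj := (omega_unpack hn hw).2.2
  have h := hadj (k+1) (by omega) (by omega)
  have e1 : ((k+1:ℕ):ℤ) = ((k:ℕ):ℤ) + 1 := by push_cast; ring
  rw [e1] at h
  exact h

lemma lam_decomp (hn : 2 ≤ n) (w : Equiv.Perm ℤ) (i : Fin n) :
    (n:ℤ) * lam n w i ≤ w (((i:ℕ):ℤ)+1) - 1 ∧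
      w (((i:ℕ):ℤ)+1) - 1 < (n:ℤ) * lam n w i + n := by
  rw [lam_eq_ediv (by omega) w i]
  set x := w (((i:ℕ):ℤ)+1) - 1 with hx
  have h0 : (0:ℤ) < (n:ℤ) := by exact_mod_cast (by omega : 0 < n)
  have h1 := Int.mul_ediv_add_emod x (n:ℤ)
  have h2 : 0 ≤ x % (n:ℤ) := Int.emod_nonneg _ (by omega)
  have h3 : x % (n:ℤ) < n := Int.emod_lt_of_pos _ h0
  omega

lemma omega_lam_monotone (hn : 2 ≤ n) {w : Equiv.Perm ℤ} (hw : w ∈ OmegaSet n) :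
    Monotone (lam n w) := by
  apply monotone_of_adj
  intro k hk
  have hAB := omega_adj hn hw k hk
  have h1 := lam_decomp hn w ⟨k, by omega⟩
  have h2 := lam_decomp hn w ⟨k+1, hk⟩
  set a := lam n w ⟨k, by omega⟩ with ha
  set b := lam n w ⟨k+1, hk⟩ with hb
  have h0 : (0:ℤ) ≤ (n:ℤ) := by positivity
  have hmul : (n:ℤ) * a < (n:ℤ) * (b + 1) := by
    have e : (n:ℤ) * (b+1) = (n:ℤ)*b + n := by ring
    simp only [Fin.val_mk] at h1 h2
    linarith
  have := lt_of_mul_lt_mul_left hmul h0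
  omega

def sigW (n : ℕ) (hn : 0 < n) (w : Equiv.Perm ℤ) (i : Fin n) : Fin n :=
  idxF n hn (w (((i:ℕ):ℤ)+1))

lemma sigW_spec (hn : 2 ≤ n) {w : Equiv.Perm ℤ} (hw : w ∈ OmegaSet n) (i : Fin n) :
    w (((i:ℕ):ℤ)+1) = ((sigW n (by omega) w i : ℕ):ℤ) + 1 + (n:ℤ) * lam n w i ∧
    lam n w (sigW n (by omega) w i) = - lam n w i ∧
    sigW n (by omega) w (sigW n (by omega) w i) = i := by
  obtain ⟨hP, hinv, -⟩ := omega_unpack hn hw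
  have hn0 : 0 < n := by omega
  have h0 : (0:ℤ) < (n:ℤ) := by exact_mod_cast hn0
  set x := w (((i:ℕ):ℤ)+1) with hx
  have hdec := idxF_decomp hn0 x
  have hlam : lam n w i = (x - 1) / (n:ℤ) := lam_eq_ediv hn0 w i
  have h1 : x = ((sigW n hn0 w i : ℕ):ℤ) + 1 + (n:ℤ) * lam n w i := by
    rw [hlam]
    unfold sigW
    rw [← hx]
    omega
  -- position of sigma i
  have hpos : ((sigW n hn0 w i : ℕ):ℤ) + 1 = x - (n:ℤ) * lam n w i := by omega
  have hwσ : w (((sigW n hn0 w i : ℕ):ℤ) + 1) = ((i:ℕ):ℤ) + 1 - (n:ℤ) * lam n w i := by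
    rw [hpos]
    have e : x - (n:ℤ) * lam n w i = x + (n:ℤ) * (- lam n w i) := by ring
    rw [e, hP.add_mul, hx, hinv]
    ring
  have hiLt : ((i:ℕ):ℤ) < (n:ℤ) := by exact_mod_cast i.isLt
  have h2 : lam n w (sigW n hn0 w i) = - lam n w i := by
    rw [lam_eq_ediv hn0 w, hwσ]
    have e : ((i:ℕ):ℤ) + 1 - (n:ℤ) * lam n w i - 1 = ((i:ℕ):ℤ) + (- lam n w i) * (n:ℤ) := by
      ring
    rw [e, Int.add_mul_ediv_right _ _ (by omega : (n:ℤ) ≠ 0),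
      Int.ediv_eq_zero_of_lt (by positivity) hiLt]
    ring
  have h3 : sigW n hn0 w (sigW n hn0 w i) = i := by
    show idxF n hn0 (w (((sigW n hn0 w i : ℕ):ℤ)+1)) = i
    rw [hwσ]
    have e : ((i:ℕ):ℤ) + 1 - (n:ℤ) * lam n w i = (((i:ℕ):ℤ) + 1) + (n:ℤ) * (- lam n w i) := by
      ring
    rw [e, idxF_add_mul hn0, idxF_of_fin hn0]
  exact ⟨h1, h2, h3⟩

lemma omega_lam_antisym (hn : 2 ≤ n) {w : Equiv.Perm ℤ} (hw : w ∈ OmegaSet n) :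
    ∀ i, lam n w i + lam n w (revF n i) = 0 :=
  antisym_of_sigma (omega_lam_monotone hn hw) (sigW n (by omega) w)
    (fun i => (sigW_spec hn hw i).2.2) (fun i => (sigW_spec hn hw i).2.1)

def windowSet (n : ℕ) (lm : Fin n → ℤ) : Finset ℤ :=
  Finset.image (fun r : Fin n => ((r:ℕ):ℤ) + 1 - (n:ℤ) * lm r) Finset.univ

lemma windowSet_card (hn : 2 ≤ n) (lm : Fin n → ℤ) : (windowSet n lm).card = n := by
  unfold windowSet
  rw [Finset.card_image_of_injective _ ?inj, Finset.card_univ, Fintype.card_fin]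
  case inj =>
    intro r r' h
    dsimp only at h
    have hb : ((r:ℕ):ℤ) < (n:ℤ) := by exact_mod_cast r.isLt
    have hb' : ((r':ℕ):ℤ) < (n:ℤ) := by exact_mod_cast r'.isLt
    have hb0 : (0:ℤ) ≤ ((r:ℕ):ℤ) := by positivity
    have hb0' : (0:ℤ) ≤ ((r':ℕ):ℤ) := by positivity
    have hd : (n:ℤ) ∣ ((r:ℕ):ℤ) - ((r':ℕ):ℤ) := ⟨lm r - lm r', by linear_combination h⟩
    have := dvd_small_eq hd (by omega) (by omega)
    apply Fin.ext
    omega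

lemma omega_window_mem (hn : 2 ≤ n) {w : Equiv.Perm ℤ} (hw : w ∈ OmegaSet n) (i : Fin n) :
    w (((i:ℕ):ℤ)+1) ∈ windowSet n (lam n w) := by
  obtain ⟨h1, h2, -⟩ := sigW_spec hn hw i
  unfold windowSet
  rw [Finset.mem_image]
  exact ⟨sigW n (by omega) w i, Finset.mem_univ _, by rw [h2, h1]; ring⟩

lemma omega_strictMono (hn : 2 ≤ n) {w : Equiv.Perm ℤ} (hw : w ∈ OmegaSet n) :
    StrictMono (fun i : Fin n => w (((i:ℕ):ℤ)+1)) := by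
  apply strictmono_of_adj
  intro k hk
  have := omega_adj hn hw k hk
  simpa using this

lemma omega_lam_inj (hn : 2 ≤ n) {w w' : Equiv.Perm ℤ} (hw : w ∈ OmegaSet n)
    (hw' : w' ∈ OmegaSet n) (h : lam n w = lam n w') : w = w' := by
  have hc : (windowSet n (lam n w)).card = n := windowSet_card hn _
  have hF : (fun i : Fin n => w (((i:ℕ):ℤ)+1))
      = (windowSet n (lam n w)).orderEmbOfFin hc :=
    Finset.orderEmbOfFin_unique hc (fun i => omega_window_mem hn hw i)
      (omega_strictMono hn hw)
  have hF' : (fun i : Fin n => w' (((i:ℕ):ℤ)+1))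
      = (windowSet n (lam n w)).orderEmbOfFin hc := by
    apply Finset.orderEmbOfFin_unique hc
    · intro i
      have := omega_window_mem hn hw' i
      rwa [← h] at this
    · exact omega_strictMono hn hw'
  have hFF : ∀ i : Fin n, w (((i:ℕ):ℤ)+1) = w' (((i:ℕ):ℤ)+1) := by
    intro i
    have := hF.trans hF'.symm
    exact congrFun this i
  have hn0 : 0 < n := by omega
  apply Equiv.ext
  intro j
  have hdec := idxF_decomp hn0 j
  have hP : Per n w := (omega_unpack hn hw).1
  have hP' : Per n w' := (omega_unpack hn hw').1
  set q := (j - 1) / (n:ℤ) with hq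
  set i := idxF n hn0 j with hi
  have e : j = (((i:ℕ):ℤ)+1) + (n:ℤ) * q := by omega
  rw [e, hP.add_mul, hP'.add_mul, hFF i]

end PartB2
section PartB3

variable {n : ℕ}

def sigZ (n : ℕ) (lm : Fin n → ℤ) (i : Fin n) : ℤ :=
  ((i:ℕ):ℤ) + (n:ℤ) - (cntLe n lm (lm i) : ℤ) - (cntLt n lm (lm i) : ℤ)

def wFun (n : ℕ) (hn : 0 < n) (lm : Fin n → ℤ) (j : ℤ) : ℤ :=
  j + (sigZ n lm (idxF n hn j) - ((idxF n hn j : ℕ):ℤ)) + (n:ℤ) * lm (idxF n hn j)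

lemma wFun_eq (hn : 0 < n) (lm : Fin n → ℤ) (j : ℤ) :
    wFun n hn lm j = j + (sigZ n lm (idxF n hn j) - ((idxF n hn j : ℕ):ℤ))
      + (n:ℤ) * lm (idxF n hn j) := rfl

lemma revF_invol (i : Fin n) : revF n (revF n i) = i := by
  have := i.isLt
  apply Fin.ext
  simp only [revF]
  omega

section Hyps

variable (lm : Fin n → ℤ)

lemma hcnt_sym (hA : ∀ i, lm i + lm (revF n i) = 0) : ∀ v, cntLt n lm (-v) = n - cntLe n lm v ∧ cntLe n lm (-v) = n - cntLt n lm v :=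
  cnt_sym (revF n) revF_invol (fun i => by linarith [hA i])

lemma cnt_window (hmono : Monotone lm) (i : Fin n) :
    cntLt n lm (lm i) ≤ (i:ℕ) ∧ (i:ℕ) < cntLe n lm (lm i) := by
  constructor
  · have h2 : ¬ ((i:ℕ) < cntLt n lm (lm i)) := by
      rw [← lt_cntLt_iff hmono (lm i) i]
      omega
    omega
  · exact (le_cntLe_iff hmono (lm i) i).mp le_rfl

lemma sigZ_bounds (hmono : Monotone lm) (i : Fin n) : 0 ≤ sigZ n lm i ∧ sigZ n lm i < (n:ℤ) := by
  have h1 := cnt_window lm hmono i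
  have h2 := cntLe_le_n lm (lm i)
  have h3 := cntLt_le_n lm (lm i)
  unfold sigZ
  omega

def sigIdx (hn0 : 0 < n) (i : Fin n) : Fin n := idxF n hn0 (sigZ n lm i + 1)

lemma sigIdx_val (hmono : Monotone lm) (hA : ∀ i, lm i + lm (revF n i) = 0) (hn0 : 0 < n) (i : Fin n) :
    ((sigIdx lm hn0 i : ℕ):ℤ) = sigZ n lm i := by
  unfold sigIdx
  rw [idxF_val]
  have hb := sigZ_bounds lm hmono i
  rw [add_sub_cancel_right]
  exact Int.emod_eq_of_lt hb.1 hb.2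

lemma lam_sigIdx (hmono : Monotone lm) (hA : ∀ i, lm i + lm (revF n i) = 0) (hn0 : 0 < n) (i : Fin n) : lm (sigIdx lm hn0 i) = - lm i := by
  have hjv : ((sigIdx lm hn0 i : ℕ):ℤ) = sigZ n lm i := sigIdx_val lm hmono hA hn0 i
  have hw := cnt_window lm hmono i
  have hLe := cntLe_le_n lm (lm i)
  have hLt := cntLt_le_n lm (lm i)
  have hs := hcnt_sym lm hA (lm i)
  unfold sigZ at hjv
  have hub : lm (sigIdx lm hn0 i) ≤ - lm i := by
    rw [le_cntLe_iff hmono (- lm i) (sigIdx lm hn0 i), hs.2]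
    omega
  have hlb : ¬ (lm (sigIdx lm hn0 i) < - lm i) := by
    rw [lt_cntLt_iff hmono (- lm i) (sigIdx lm hn0 i), hs.1]
    omega
  omega

lemma sigZ_sigIdx (hmono : Monotone lm) (hA : ∀ i, lm i + lm (revF n i) = 0) (hn0 : 0 < n) (i : Fin n) :
    sigZ n lm (sigIdx lm hn0 i) = ((i:ℕ):ℤ) := by
  have hjv := sigIdx_val lm hmono hA hn0 i
  have hlam := lam_sigIdx lm hmono hA hn0 i
  have hs := hcnt_sym lm hA (lm i)
  have hLe := cntLe_le_n lm (lm i)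
  have hLt := cntLt_le_n lm (lm i)
  have hw := cnt_window lm hmono i
  unfold sigZ
  rw [hlam, hs.1, hs.2]
  unfold sigZ at hjv
  push_cast
  omega

lemma sigIdx_invol (hmono : Monotone lm) (hA : ∀ i, lm i + lm (revF n i) = 0) (hn0 : 0 < n) (i : Fin n) :
    sigIdx lm hn0 (sigIdx lm hn0 i) = i := by
  apply Fin.ext
  have h1 := sigIdx_val lm hmono hA hn0 (sigIdx lm hn0 i)
  rw [sigZ_sigIdx lm hmono hA hn0 i] at h1
  exact_mod_cast h1

lemma wFun_per (hn0 : 0 < n) (j : ℤ) :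
    wFun n hn0 lm (j + (n:ℤ)) = wFun n hn0 lm j + (n:ℤ) := by
  rw [wFun_eq, wFun_eq]
  have : j + (n:ℤ) = j + (n:ℤ) * 1 := by ring
  rw [this, idxF_add_mul hn0]
  ring

lemma wFun_idx (hn0 : 0 < n) (j : ℤ) :
    idxF n hn0 (wFun n hn0 lm j) = sigIdx lm hn0 (idxF n hn0 j) := by
  set i := idxF n hn0 j with hi
  set q := (j - 1) / (n:ℤ) with hq
  have hj : j = ((i:ℕ):ℤ) + 1 + (n:ℤ) * q := idxF_decomp hn0 j
  have e : wFun n hn0 lm j = (sigZ n lm i + 1) + (n:ℤ) * (q + lm i) := by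
    rw [wFun_eq]
    linear_combination hj
  rw [e, idxF_add_mul hn0]
  rfl

lemma wFun_invol (hmono : Monotone lm) (hA : ∀ i, lm i + lm (revF n i) = 0) (hn0 : 0 < n) : Function.Involutive (wFun n hn0 lm) := by
  intro j
  set i := idxF n hn0 j with hi
  rw [wFun_eq hn0 lm (wFun n hn0 lm j), wFun_idx lm hn0 j, ← hi,
    sigZ_sigIdx lm hmono hA hn0 i, sigIdx_val lm hmono hA hn0 i,
    lam_sigIdx lm hmono hA hn0 i, wFun_eq]
  ring

lemma wFun_window (hn0 : 0 < n) (i : Fin n) :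
    wFun n hn0 lm (((i:ℕ):ℤ)+1) = sigZ n lm i + 1 + (n:ℤ) * lm i := by
  rw [wFun_eq, idxF_of_fin hn0]
  ring

lemma wFun_adj (hmono : Monotone lm) (hA : ∀ i, lm i + lm (revF n i) = 0) (hn0 : 0 < n) (k : ℕ) (hk : k + 1 < n) :
    wFun n hn0 lm (((k:ℕ):ℤ)+1) < wFun n hn0 lm (((k:ℕ):ℤ)+2) := by
  set a : Fin n := ⟨k, by omega⟩ with hadef
  set b : Fin n := ⟨k+1, hk⟩ with hbdef
  have ea : wFun n hn0 lm (((k:ℕ):ℤ)+1) = sigZ n lm a + 1 + (n:ℤ) * lm a := by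
    have : (((k:ℕ):ℤ)+1) = ((a:ℕ):ℤ)+1 := by simp [hadef]
    rw [this, wFun_window lm hn0 a]
  have eb : wFun n hn0 lm (((k:ℕ):ℤ)+2) = sigZ n lm b + 1 + (n:ℤ) * lm b := by
    have : (((k:ℕ):ℤ)+2) = ((b:ℕ):ℤ)+1 := by simp [hbdef]; push_cast; ring
    rw [this, wFun_window lm hn0 b]
  rw [ea, eb]
  have hab : lm a ≤ lm b := hmono (by simp [hadef, hbdef, Fin.le_def])
  rcases eq_or_lt_of_le hab with heq | hlt
  · -- equal values: sigZ differs by exactly 1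
    have : sigZ n lm b = sigZ n lm a + 1 := by
      unfold sigZ
      rw [← heq]
      simp [hadef, hbdef]
      push_cast
      ring
    rw [this, heq]
    omega
  · have h1 := sigZ_bounds lm hmono a
    have h2 := sigZ_bounds lm hmono b
    have hmul : (n:ℤ) * (lm a + 1) ≤ (n:ℤ) * lm b := by
      apply mul_le_mul_of_nonneg_left (by omega) (by positivity)
    nlinarith [hmul]

lemma omega_exists (hmono : Monotone lm) (hA : ∀ i, lm i + lm (revF n i) = 0) (hn0 : 0 < n) (hn2 : 2 ≤ n) :
    ∃ w : Equiv.Perm ℤ, w ∈ OmegaSet n ∧ lam n w = lm := by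
  have hinvol := wFun_invol lm hmono hA hn0
  set w : Equiv.Perm ℤ := ⟨wFun n hn0 lm, wFun n hn0 lm, hinvol, hinvol⟩ with hwdef
  have happ : ∀ j, w j = wFun n hn0 lm j := fun j => rfl
  have hPer : Per n w := by
    intro j
    rw [happ, happ, wFun_per lm hn0]
  have hbij : Function.Bijective (sigIdx lm hn0) :=
    Function.Involutive.bijective (sigIdx_invol lm hmono hA hn0)
  have hrevbij : Function.Bijective (revF n) :=
    Function.Involutive.bijective revF_invol
  have hlamW : lam n w = lm := by
    funext i
    rw [lam_eq_ediv hn0 w i, happ, wFun_window lm hn0 i]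
    have hb := sigZ_bounds lm hmono i
    have e : sigZ n lm i + 1 + (n:ℤ) * lm i - 1 = sigZ n lm i + lm i * (n:ℤ) := by ring
    rw [e, Int.add_mul_ediv_right _ _ (by omega : (n:ℤ) ≠ 0),
      Int.ediv_eq_zero_of_lt hb.1 hb.2]
    ring
  refine ⟨w, ?_, hlamW⟩
  rw [omega_iff hn2]
  refine ⟨⟨hPer, ?_⟩, ?_, ?_⟩
  · -- sum condition
    have himg : Finset.Icc (1:ℤ) (n:ℤ) = Finset.image (fun i : Fin n => ((i:ℕ):ℤ)+1)
        Finset.univ := by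
      apply Finset.ext
      intro x
      simp only [Finset.mem_Icc, Finset.mem_image, Finset.mem_univ, true_and]
      constructor
      · intro ⟨h1, h2⟩
        refine ⟨⟨(x-1).toNat, by omega⟩, ?_⟩
        simp only []
        omega
      · rintro ⟨i, rfl⟩
        have := i.isLt
        constructor
        · omega
        · exact_mod_cast Nat.succ_le_of_lt this
    have hinj : Function.Injective (fun i : Fin n => ((i:ℕ):ℤ)+1) := by
      intro a b h
      simp only [add_left_inj, Nat.cast_inj] at h
      exact Fin.ext h
    rw [himg, Finset.sum_image (fun a _ b _ h => hinj h),
      Finset.sum_image (fun a _ b _ h => hinj h)]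
    have hsum1 : ∑ i : Fin n, w (((i:ℕ):ℤ)+1)
        = ∑ i : Fin n, (sigZ n lm i + 1 + (n:ℤ) * lm i) := by
      apply Finset.sum_congr rfl
      intro i _
      rw [happ, wFun_window lm hn0]
    rw [hsum1]
    have hsig : ∑ i : Fin n, sigZ n lm i = ∑ i : Fin n, ((i:ℕ):ℤ) := by
      have h1 : ∑ i : Fin n, sigZ n lm i = ∑ i : Fin n, ((sigIdx lm hn0 i : ℕ):ℤ) := by
        apply Finset.sum_congr rfl
        intro i _
        rw [sigIdx_val lm hmono hA hn0 i]
      rw [h1]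
      exact hbij.sum_comp (fun j : Fin n => ((j:ℕ):ℤ))
    have hlamsum : ∑ i : Fin n, lm i = 0 := by
      have h1 : ∑ i : Fin n, lm (revF n i) = ∑ i : Fin n, lm i :=
        hrevbij.sum_comp lm
      have h2 : ∑ i : Fin n, (lm i + lm (revF n i)) = 0 := by
        apply Finset.sum_eq_zero
        intro i _
        exact hA i
      rw [Finset.sum_add_distrib, h1] at h2
      omega
    rw [Finset.sum_add_distrib, Finset.sum_add_distrib, ← Finset.mul_sum, hlamsum, hsig,
      Finset.sum_add_distrib]
    ring
  · -- involution
    apply Equiv.ext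
    intro x
    simp only [Equiv.Perm.mul_apply, Equiv.Perm.one_apply]
    rw [happ, happ]
    exact hinvol x
  · -- increasing on window
    intro i hi1 hi2
    have hk : (i - 1) + 1 < n := by omega
    have := wFun_adj lm hmono hA hn0 (i-1) hk
    rw [← happ, ← happ] at this
    have e1 : (((i-1:ℕ):ℤ)+1) = (i:ℤ) := by
      have : (1:ℕ) ≤ i := hi1
      push_cast [Nat.cast_sub this]
      ring
    have e2 : (((i-1:ℕ):ℤ)+2) = (i:ℤ)+1 := by
      have : (1:ℕ) ≤ i := hi1
      push_cast [Nat.cast_sub this]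
      ring
    rw [e1, e2] at this
    exact this

end Hyps

end PartB3
section PartC1

variable {n : ℕ}

lemma val_iff {lm : Fin n → ℤ} (hmono : Monotone lm) (v : ℤ) (i : Fin n) :
    lm i = v ↔ (cntLt n lm v ≤ (i:ℕ) ∧ (i:ℕ) < cntLe n lm v) := by
  have h1 := lt_cntLt_iff hmono v i
  have h2 := le_cntLe_iff hmono v i
  constructor
  · intro h
    refine ⟨?_, h2.mp (le_of_eq h)⟩
    by_contra hc
    push_neg at hc
    have := h1.mpr hc
    omega
  · rintro ⟨ha, hb⟩
    have hle : lm i ≤ v := h2.mpr hb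
    have hnlt : ¬ (lm i < v) := fun hlt => by have := h1.mp hlt; omega
    omega

lemma cntLe_eq_add (lm : Fin n → ℤ) (v : ℤ) :
    cntLe n lm v = cntLt n lm v + (Finset.univ.filter fun i => lm i = v).card := by
  unfold cntLe cntLt
  rw [← Finset.card_union_of_disjoint]
  · congr 1
    apply Finset.ext
    intro i
    simp only [Finset.mem_union, Finset.mem_filter, Finset.mem_univ, true_and]
    omega
  · rw [Finset.disjoint_filter]
    intro i _ h1 h2
    omega

lemma cntLt_le_cntLe (lm : Fin n → ℤ) (v : ℤ) : cntLt n lm v ≤ cntLe n lm v := by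
  apply Finset.card_le_card
  intro i
  simp only [Finset.mem_filter, Finset.mem_univ, true_and]
  omega

lemma exists_block {B : ℕ → ℕ} (hB0 : B 0 = 0) {m i : ℕ} (hi : i < B m) :
    ∃ k, k < m ∧ B k ≤ i ∧ i < B (k + 1) := by
  set P : ℕ → Prop := fun t => B t ≤ i with hP
  have hP0 : P 0 := by simp [hP, hB0]
  set k := Nat.findGreatest P m with hk
  have hkm : k ≤ m := Nat.findGreatest_le m
  have hPk : P k := Nat.findGreatest_spec (Nat.zero_le m) hP0
  have hkm' : k < m := by
    rcases Nat.lt_or_ge k m with h | h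
    · exact h
    · exfalso
      have : k = m := by omega
      rw [this] at hPk
      simp only [hP] at hPk
      omega
  refine ⟨k, hkm', hPk, ?_⟩
  have := Nat.findGreatest_is_greatest (show k < k + 1 by omega) (by omega)
  simp only [hP] at this
  omega

/-- `B (t+1) = B t + l.getD t 0` for prefix sums -/
lemma take_sum_succ (l : List ℕ) (t : ℕ) :
    (l.take (t+1)).sum = (l.take t).sum + l.getD t 0 := by
  rcases Nat.lt_or_ge t l.length with h | h
  · rw [List.sum_take_succ l t h, List.getD_eq_getElem l 0 h]
  · rw [List.take_of_length_le h, List.take_of_length_le (by omega),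
      List.getD_eq_default _ _ h]
    omega

lemma take_sum_mono (l : List ℕ) : Monotone fun t => (l.take t).sum := by
  apply monotone_nat_of_le_succ
  intro t
  rw [take_sum_succ]
  omega

lemma take_sum_all (l : List ℕ) (t : ℕ) (h : l.length ≤ t) : (l.take t).sum = l.sum := by
  rw [List.take_of_length_le h]

/-- drop-sum recursion for ℤ lists -/
lemma drop_sum_succ (l : List ℤ) (t : ℕ) (h : t < l.length) :
    (l.drop t).sum = l.getD t 0 + (l.drop (t+1)).sum := by
  rw [List.drop_eq_getElem_cons h, List.sum_cons, List.getD_eq_getElem l 0 h]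

lemma deltaNeg_length (n : ℕ) (w : Equiv.Perm ℤ) :
    (deltaNeg n w).length = (negVals n w).length := by
  unfold deltaNeg
  rw [List.length_map, List.length_zip, List.length_tail, List.length_append]
  simp

lemma deltaNeg_getElem (n : ℕ) (w : Equiv.Perm ℤ) (k : ℕ) (hk : k < (negVals n w).length) :
    (deltaNeg n w)[k]'(by rw [deltaNeg_length]; exact hk)
      = (negVals n w ++ [0])[k+1]'(by rw [List.length_append]; simp; omega)
        - (negVals n w ++ [0])[k]'(by rw [List.length_append]; simp; omega) := by
  unfold deltaNeg
  rw [List.getElem_map, List.getElem_zip, List.getElem_tail]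

lemma muNeg_length (n : ℕ) (w : Equiv.Perm ℤ) :
    (muNeg n w).length = (negVals n w).length := by
  unfold muNeg
  rw [List.length_map]

lemma negVals_sorted (n : ℕ) (w : Equiv.Perm ℤ) :
    List.Pairwise (· < ·) (negVals n w) := by
  unfold negVals
  exact (Finset.sortedLT_sort _).pairwise

lemma negVals_mem_iff (n : ℕ) (w : Equiv.Perm ℤ) (v : ℤ) :
    v ∈ negVals n w ↔ ∃ i : Fin n, lam n w i < 0 ∧ lam n w i = v := by
  unfold negVals
  rw [Finset.mem_sort, Finset.mem_image]
  constructor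
  · rintro ⟨i, hi, rfl⟩
    simp only [Finset.mem_filter, Finset.mem_univ, true_and] at hi
    exact ⟨i, hi, rfl⟩
  · rintro ⟨i, hi, rfl⟩
    exact ⟨i, by simp only [Finset.mem_filter, Finset.mem_univ, true_and]; exact hi, rfl⟩

lemma negVals_neg (n : ℕ) (w : Equiv.Perm ℤ) (v : ℤ) (hv : v ∈ negVals n w) : v < 0 := by
  rw [negVals_mem_iff] at hv
  obtain ⟨i, h1, h2⟩ := hv
  omega

end PartC1
section PartC2

variable {n : ℕ}

lemma omega_cnt_blocks (hn : 2 ≤ n) {w : Equiv.Perm ℤ} (hw : w ∈ OmegaSet n) (k : ℕ)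
    (hk : k < (negVals n w).length) :
    cntLt n (lam n w) ((negVals n w)[k]'hk) = ((muNeg n w).take k).sum ∧
    cntLe n (lam n w) ((negVals n w)[k]'hk) = ((muNeg n w).take (k+1)).sum := by
  have hmono := omega_lam_monotone hn hw
  have hsort := List.pairwise_iff_getElem.mp (negVals_sorted n w)
  have hcount : ∀ (j : ℕ) (hj : j < (negVals n w).length),
      (Finset.univ.filter fun i => lam n w i = (negVals n w)[j]'hj).card
        = (muNeg n w).getD j 0 := by
    intro j hj
    rw [List.getD_eq_getElem _ 0 (by rw [muNeg_length]; exact hj)]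
    unfold muNeg
    rw [List.getElem_map]
  -- key step lemma: cntLt of V[j+1] equals cntLe of V[j]
  have hstep : ∀ (j : ℕ) (hj : j + 1 < (negVals n w).length),
      cntLt n (lam n w) ((negVals n w)[j+1]'hj)
        = cntLe n (lam n w) ((negVals n w)[j]'(by omega)) := by
    intro j hj
    unfold cntLt cntLe
    congr 1
    apply Finset.ext
    intro i
    simp only [Finset.mem_filter, Finset.mem_univ, true_and]
    constructor
    · intro h
      have hv1 : (negVals n w)[j+1]'hj < 0 :=
        negVals_neg n w _ (List.getElem_mem _)
      have hneg : lam n w i < 0 := by omega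
      have hmem : lam n w i ∈ negVals n w := (negVals_mem_iff n w _).mpr ⟨i, hneg, rfl⟩
      obtain ⟨t, ht, hVt⟩ := List.mem_iff_getElem.mp hmem
      have htj : t ≤ j := by
        by_contra hc
        push_neg at hc
        rcases Nat.lt_or_ge (j+1) t with h2 | h2
        · have := hsort (j+1) t hj ht h2
          omega
        · have : t = j + 1 := by omega
          subst this
          omega
      rcases Nat.lt_or_ge t j with h2 | h2
      · have := hsort t j ht (by omega) h2
        omega
      · have : t = j := by omega
        subst this
        omega
    · intro h
      have := hsort j (j+1) (by omega) hj (by omega)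
      omega
  induction k with
  | zero =>
      have hbase : cntLt n (lam n w) ((negVals n w)[0]'hk) = 0 := by
        unfold cntLt
        rw [Finset.card_eq_zero, Finset.filter_eq_empty_iff]
        intro i _
        intro hc
        have hv0 : (negVals n w)[0]'hk < 0 := negVals_neg n w _ (List.getElem_mem _)
        have hneg : lam n w i < 0 := by omega
        have hmem : lam n w i ∈ negVals n w := (negVals_mem_iff n w _).mpr ⟨i, hneg, rfl⟩
        obtain ⟨t, ht, hVt⟩ := List.mem_iff_getElem.mp hmem
        rcases Nat.eq_zero_or_pos t with h2 | h2
        · subst h2; omega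
        · have := hsort 0 t hk ht h2
          omega
      constructor
      · rw [hbase]; simp
      · rw [cntLe_eq_add, hbase, hcount 0 hk, take_sum_succ]
        simp
  | succ k ih =>
      have hk' : k < (negVals n w).length := by omega
      have ih' := ih hk' hstep
      constructor
      · rw [hstep k hk, ih'.2]
      · rw [cntLe_eq_add, hstep k hk, ih'.2, hcount (k+1) hk, take_sum_succ (muNeg n w) (k+1)]

lemma omega_cntLt_zero (hn : 2 ≤ n) {w : Equiv.Perm ℤ} (hw : w ∈ OmegaSet n) :
    cntLt n (lam n w) 0 = ((muNeg n w).take (negVals n w).length).sum := by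
  rcases Nat.eq_zero_or_pos (negVals n w).length with h0 | h0
  · rw [h0]
    simp only [List.take_zero, List.sum_nil]
    unfold cntLt
    rw [Finset.card_eq_zero, Finset.filter_eq_empty_iff]
    intro i _ hc
    have hmem : lam n w i ∈ negVals n w := (negVals_mem_iff n w _).mpr ⟨i, hc, rfl⟩
    rw [List.length_eq_zero_iff.mp h0] at hmem
    simp at hmem
  · obtain ⟨m', hm'⟩ : ∃ m', (negVals n w).length = m' + 1 := ⟨_, (Nat.succ_pred_eq_of_pos h0).symm⟩
    have hm'lt : m' < (negVals n w).length := by omega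
    have hsort := List.pairwise_iff_getElem.mp (negVals_sorted n w)
    have heq : cntLt n (lam n w) 0 = cntLe n (lam n w) ((negVals n w)[m']'hm'lt) := by
      unfold cntLt cntLe
      congr 1
      apply Finset.ext
      intro i
      simp only [Finset.mem_filter, Finset.mem_univ, true_and]
      constructor
      · intro h
        have hmem : lam n w i ∈ negVals n w := (negVals_mem_iff n w _).mpr ⟨i, h, rfl⟩
        obtain ⟨t, ht, hVt⟩ := List.mem_iff_getElem.mp hmem
        rcases Nat.lt_or_ge t m' with h2 | h2
        · have := hsort t m' ht hm'lt h2
          omega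
        · have : t = m' := by omega
          subst this
          omega
      · intro h
        have hv : (negVals n w)[m']'hm'lt < 0 := negVals_neg n w _ (List.getElem_mem _)
        omega
    rw [heq, (omega_cnt_blocks hn hw m' hm'lt).2, hm']

lemma omega_two_Bm (hn : 2 ≤ n) {w : Equiv.Perm ℤ} (hw : w ∈ OmegaSet n) :
    2 * ((muNeg n w).take (negVals n w).length).sum ≤ n := by
  have hs := hcnt_sym (lam n w) (omega_lam_antisym hn hw) 0
  rw [neg_zero] at hs
  have h1 := cntLt_le_cntLe (lam n w) 0
  have h2 := cntLe_le_n (lam n w) 0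
  have h3 := omega_cntLt_zero hn hw
  omega

lemma omega_lam_lt_zero_iff (hn : 2 ≤ n) {w : Equiv.Perm ℤ} (hw : w ∈ OmegaSet n) (i : Fin n) :
    lam n w i < 0 ↔ (i:ℕ) < ((muNeg n w).take (negVals n w).length).sum := by
  rw [lt_cntLt_iff (omega_lam_monotone hn hw) 0 i, omega_cntLt_zero hn hw]

lemma omega_lam_block (hn : 2 ≤ n) {w : Equiv.Perm ℤ} (hw : w ∈ OmegaSet n) (k : ℕ)
    (hk : k < (negVals n w).length) (i : Fin n)
    (h1 : ((muNeg n w).take k).sum ≤ (i:ℕ)) (h2 : (i:ℕ) < ((muNeg n w).take (k+1)).sum) :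
    lam n w i = (negVals n w)[k]'hk := by
  rw [val_iff (omega_lam_monotone hn hw)]
  obtain ⟨hlt, hle⟩ := omega_cnt_blocks hn hw k hk
  rw [hlt, hle]
  exact ⟨h1, h2⟩

lemma omega_lam_zero (hn : 2 ≤ n) {w : Equiv.Perm ℤ} (hw : w ∈ OmegaSet n) (i : Fin n)
    (h1 : ((muNeg n w).take (negVals n w).length).sum ≤ (i:ℕ))
    (h2 : (i:ℕ) < n - ((muNeg n w).take (negVals n w).length).sum) :
    lam n w i = 0 := by
  have hge : ¬ (lam n w i < 0) := by
    rw [omega_lam_lt_zero_iff hn hw]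
    omega
  have hA := omega_lam_antisym hn hw i
  have hrev : ¬ (lam n w (revF n i) < 0) := by
    rw [omega_lam_lt_zero_iff hn hw, revF_val]
    have := i.isLt
    omega
  omega

lemma omega_lam_eq_of_data (hn : 2 ≤ n) {w w' : Equiv.Perm ℤ} (hw : w ∈ OmegaSet n)
    (hw' : w' ∈ OmegaSet n) (hV : negVals n w = negVals n w')
    (hmu : muNeg n w = muNeg n w') : lam n w = lam n w' := by
  have hB0 : ((muNeg n w).take 0).sum = 0 := by simp
  have h2B := omega_two_Bm hn hw
  funext i
  have hiLt := i.isLt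
  rcases Nat.lt_or_ge (i:ℕ) (((muNeg n w).take (negVals n w).length).sum) with hneg | hpos
  · obtain ⟨k, hkm, hk1, hk2⟩ :=
      exists_block (B := fun t => ((muNeg n w).take t).sum) hB0 hneg
    have e1 := omega_lam_block hn hw k hkm i hk1 hk2
    have e2 := omega_lam_block hn hw' k (by rw [← hV]; exact hkm) i
      (by rw [← hmu]; exact hk1) (by rw [← hmu]; exact hk2)
    rw [e1, e2]
    exact List.getElem_of_eq hV _
  · rcases Nat.lt_or_ge (i:ℕ) (n - ((muNeg n w).take (negVals n w).length).sum) with hmid | hmir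
    · rw [omega_lam_zero hn hw i hpos hmid,
        omega_lam_zero hn hw' i (by rw [← hV, ← hmu]; exact hpos)
          (by rw [← hV, ← hmu]; exact hmid)]
    · have hA := omega_lam_antisym hn hw i
      have hA' := omega_lam_antisym hn hw' i
      have h2B' := h2B
      have hrevlt : ((revF n i : Fin n) : ℕ) < ((muNeg n w).take (negVals n w).length).sum := by
        rw [revF_val]
        omega
      obtain ⟨k, hkm, hk1, hk2⟩ :=
        exists_block (B := fun t => ((muNeg n w).take t).sum) hB0 hrevlt
      have e1 := omega_lam_block hn hw k hkm (revF n i) hk1 hk2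
      have e2 := omega_lam_block hn hw' k (by rw [← hV]; exact hkm) (revF n i)
        (by rw [← hmu]; exact hk1) (by rw [← hmu]; exact hk2)
      have := List.getElem_of_eq hV (hkm)
      omega

end PartC2
section PartC3

variable {n : ℕ}

/-- The sequence λ built from multiplicities `c` and gaps `d`. -/
def lamD (n : ℕ) (c : List ℕ) (d : List ℤ) (i : Fin n) : ℤ :=
  ∑ t ∈ Finset.range d.length, (d.getD t 0) *
    ((if n - 1 - (i:ℕ) < (c.take (t+1)).sum then (1:ℤ) else 0)
      - (if (i:ℕ) < (c.take (t+1)).sum then (1:ℤ) else 0))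

lemma take_sum_le_sum (l : List ℕ) (t : ℕ) : (l.take t).sum ≤ l.sum := by
  rcases le_or_gt t l.length with h | h
  · calc (l.take t).sum ≤ (l.take l.length).sum := take_sum_mono l h
      _ = l.sum := take_sum_all l _ le_rfl
  · rw [take_sum_all l t (by omega)]

lemma drop_sum_eq_Ico (l : List ℤ) (j : ℕ) :
    (l.drop j).sum = ∑ t ∈ Finset.Ico j l.length, l.getD t 0 := by
  have H : ∀ t j, l.length = j + t →
      (l.drop j).sum = ∑ t' ∈ Finset.Ico j l.length, l.getD t' 0 := by
    intro t
    induction t with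
    | zero =>
        intro j hj
        rw [List.drop_eq_nil_of_le (by omega), Finset.Ico_eq_empty (by omega)]
        simp
    | succ t ih =>
        intro j hj
        rw [drop_sum_succ l j (by omega), ih (j+1) (by omega),
          Finset.sum_eq_sum_Ico_succ_bot (by omega : j < l.length)]
  rcases le_or_gt j l.length with h | h
  · exact H (l.length - j) j (by omega)
  · rw [List.drop_eq_nil_of_le (by omega), Finset.Ico_eq_empty (by omega)]
    simp

lemma getD_pos (d : List ℤ) (hd : ∀ x ∈ d, 0 < x) (t : ℕ) (ht : t < d.length) :
    0 < d.getD t 0 := by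
  rw [List.getD_eq_getElem d 0 ht]
  exact hd _ (List.getElem_mem _)

lemma getD_posN (c : List ℕ) (hc : ∀ x ∈ c, 0 < x) (t : ℕ) (ht : t < c.length) :
    0 < c.getD t 0 := by
  rw [List.getD_eq_getElem c 0 ht]
  exact hc _ (List.getElem_mem _)

lemma lamD_mono (c : List ℕ) (d : List ℤ) (hd : ∀ x ∈ d, 0 < x) :
    Monotone (lamD n c d) := by
  intro i j hij
  have hij' : (i:ℕ) ≤ (j:ℕ) := hij
  unfold lamD
  apply Finset.sum_le_sum
  intro t ht
  apply mul_le_mul_of_nonneg_left ?_ (le_of_lt (getD_pos d hd t (Finset.mem_range.mp ht)))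
  split_ifs <;> omega

lemma lamD_antisym (c : List ℕ) (d : List ℤ) :
    ∀ i : Fin n, lamD n c d i + lamD n c d (revF n i) = 0 := by
  intro i
  have hiLt := i.isLt
  unfold lamD
  rw [← Finset.sum_add_distrib]
  apply Finset.sum_eq_zero
  intro t _
  rw [revF_val]
  rw [show n - 1 - (n - 1 - (i:ℕ)) = (i:ℕ) by omega]
  ring

lemma lamD_block (hn : 2 ≤ n) (c : List ℕ) (d : List ℤ) (hsum : c.sum ≤ n / 2)
    (k : ℕ) (i : Fin n)
    (h1 : (c.take k).sum ≤ (i:ℕ)) (h2 : (i:ℕ) < (c.take (k+1)).sum) :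
    lamD n c d i = -((d.drop k).sum) := by
  have hBle : ∀ t, (c.take t).sum ≤ c.sum := take_sum_le_sum c
  unfold lamD
  rw [Finset.sum_congr rfl (g := fun t => if k ≤ t then -(d.getD t 0) else 0) ?congr]
  case congr =>
    intro t ht
    show d.getD t 0 * ((if n - 1 - (i:ℕ) < (c.take (t+1)).sum then (1:ℤ) else 0)
      - (if (i:ℕ) < (c.take (t+1)).sum then (1:ℤ) else 0)) = if k ≤ t then -(d.getD t 0) else 0
    have e1 : (c.take (t+1)).sum ≤ c.sum := take_sum_le_sum c (t+1)
    have e2 : (c.take (k+1)).sum ≤ c.sum := take_sum_le_sum c (k+1)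
    have hno : ¬ (n - 1 - (i:ℕ) < (c.take (t+1)).sum) := by omega
    rw [if_neg hno]
    rcases le_or_gt k t with h | h
    · have hyes : (i:ℕ) < (c.take (t+1)).sum :=
        lt_of_lt_of_le h2 (take_sum_mono c (by omega))
      rw [if_pos hyes, if_pos h]
      ring
    · have hno2 : ¬ ((i:ℕ) < (c.take (t+1)).sum) := by
        have e3 : (c.take (t+1)).sum ≤ (c.take k).sum := take_sum_mono c (by omega)
        omega
      rw [if_neg hno2, if_neg (by omega)]
      ring
  rw [← Finset.sum_filter]
  have hfil : (Finset.range d.length).filter (fun t => k ≤ t) = Finset.Ico k d.length := by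
    ext t
    simp only [Finset.mem_filter, Finset.mem_range, Finset.mem_Ico]
    omega
  rw [hfil, drop_sum_eq_Ico, ← Finset.sum_neg_distrib]

lemma lamD_zero (hn : 2 ≤ n) (c : List ℕ) (d : List ℤ) (hsum : c.sum ≤ n / 2) (i : Fin n)
    (h1 : c.sum ≤ (i:ℕ)) (h2 : (i:ℕ) < n - c.sum) :
    lamD n c d i = 0 := by
  have hBle : ∀ t, (c.take t).sum ≤ c.sum := take_sum_le_sum c
  unfold lamD
  apply Finset.sum_eq_zero
  intro t _
  have e1 := hBle (t+1)
  rw [if_neg (by omega), if_neg (by omega)]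
  ring

-- facts about the gap values v_k = -(d.drop k).sum
lemma vd_strict (d : List ℤ) (hd : ∀ x ∈ d, 0 < x) (k : ℕ) (hk : k < d.length) :
    -((d.drop k).sum) < -((d.drop (k+1)).sum) := by
  have := drop_sum_succ d k hk
  have := getD_pos d hd k hk
  omega

lemma vd_mono (d : List ℤ) (hd : ∀ x ∈ d, 0 < x) :
    Monotone (fun k => -((d.drop k).sum)) := by
  apply monotone_nat_of_le_succ
  intro k
  show -((d.drop k).sum) ≤ -((d.drop (k+1)).sum)
  rcases Nat.lt_or_ge k d.length with h | h
  · exact le_of_lt (vd_strict d hd k h)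
  · rw [List.drop_eq_nil_of_le (by omega), List.drop_eq_nil_of_le (by omega)]

lemma vd_zero_at_len (d : List ℤ) : -((d.drop d.length).sum) = 0 := by
  rw [List.drop_eq_nil_of_le le_rfl]
  simp

lemma vd_neg (d : List ℤ) (hd : ∀ x ∈ d, 0 < x) (k : ℕ) (hk : k < d.length) :
    -((d.drop k).sum) < 0 := by
  have h1 := vd_strict d hd k hk
  have h2 : -((d.drop (k+1)).sum) ≤ -((d.drop d.length).sum) :=
    vd_mono d hd (show k + 1 ≤ d.length by omega)
  have h3 := vd_zero_at_len d
  omega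

lemma vd_strict_mono (d : List ℤ) (hd : ∀ x ∈ d, 0 < x) (k k' : ℕ) (h : k < k')
    (hk' : k' ≤ d.length) : -((d.drop k).sum) < -((d.drop k').sum) := by
  have h1 := vd_strict d hd k (by omega)
  have h2 : -((d.drop (k+1)).sum) ≤ -((d.drop k').sum) :=
    vd_mono d hd (show k + 1 ≤ k' by omega)
  omega

lemma lamD_pos_mirror (hn : 2 ≤ n) (c : List ℕ) (d : List ℤ) (hd : ∀ x ∈ d, 0 < x)
    (hlen : c.length = d.length) (hsum : c.sum ≤ n / 2) (i : Fin n)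
    (h1 : n - c.sum ≤ (i:ℕ)) : 0 < lamD n c d i ∧
      ∃ k, k < d.length ∧ lamD n c d i = (d.drop k).sum := by
  have hiLt := i.isLt
  have hcs : 1 ≤ c.sum := by omega
  have hA := lamD_antisym (n := n) c d i
  have hrev : ((revF n i : Fin n) : ℕ) < (c.take c.length).sum := by
    rw [revF_val, take_sum_all c _ le_rfl]
    omega
  obtain ⟨k, hkm, hk1, hk2⟩ :=
    exists_block (B := fun t => (c.take t).sum) (by simp) hrev
  have hval := lamD_block hn c d hsum k (revF n i) hk1 hk2
  have hneg := vd_neg d hd k (by omega)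
  refine ⟨by omega, k, by omega, by omega⟩

lemma lamD_block_filter (hn : 2 ≤ n) (c : List ℕ) (d : List ℤ) (hc : ∀ x ∈ c, 0 < x)
    (hd : ∀ x ∈ d, 0 < x) (hlen : c.length = d.length) (hsum : c.sum ≤ n / 2)
    (k : ℕ) (hk : k < d.length) :
    (Finset.univ.filter fun i : Fin n => lamD n c d i = -((d.drop k).sum))
      = Finset.univ.filter fun i : Fin n =>
          (c.take k).sum ≤ (i:ℕ) ∧ (i:ℕ) < (c.take (k+1)).sum := by
  apply Finset.ext
  intro i
  simp only [Finset.mem_filter, Finset.mem_univ, true_and]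
  have hiLt := i.isLt
  constructor
  · intro h
    have hvneg := vd_neg d hd k hk
    rcases Nat.lt_or_ge (i:ℕ) c.sum with hr1 | hr1
    · obtain ⟨k', hk'm, h1, h2⟩ := exists_block (B := fun t => (c.take t).sum) (by simp)
        (show (i:ℕ) < (c.take c.length).sum by rw [take_sum_all c _ le_rfl]; omega)
      have hval := lamD_block hn c d hsum k' i h1 h2
      have : k' = k := by
        by_contra hne
        rcases Nat.lt_or_ge k' k with hlt | hgt
        · have := vd_strict_mono d hd k' k hlt (by omega)
          omega
        · have := vd_strict_mono d hd k k' (by omega) (by omega)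
          omega
      subst this
      exact ⟨h1, h2⟩
    · rcases Nat.lt_or_ge (i:ℕ) (n - c.sum) with hr2 | hr2
      · have := lamD_zero hn c d hsum i hr1 hr2
        omega
      · have := (lamD_pos_mirror hn c d hd hlen hsum i hr2).1
        omega
  · rintro ⟨h1, h2⟩
    exact lamD_block hn c d hsum k i h1 h2

lemma block_card (hn : 2 ≤ n) (c : List ℕ) (hsum : c.sum ≤ n / 2) (k : ℕ)
    (hk : k < c.length) :
    (Finset.univ.filter fun i : Fin n =>
        (c.take k).sum ≤ (i:ℕ) ∧ (i:ℕ) < (c.take (k+1)).sum).card = c.getD k 0 := by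
  have hBle := take_sum_le_sum c (k+1)
  have hlt : ∀ x ∈ Finset.Ico ((c.take k).sum) ((c.take (k+1)).sum), x < n := by
    intro x hx
    rw [Finset.mem_Ico] at hx
    omega
  have : (Finset.univ.filter fun i : Fin n =>
      (c.take k).sum ≤ (i:ℕ) ∧ (i:ℕ) < (c.take (k+1)).sum)
      = (Finset.Ico ((c.take k).sum) ((c.take (k+1)).sum)).attachFin hlt := by
    apply Finset.ext
    intro i
    simp only [Finset.mem_filter, Finset.mem_univ, true_and, Finset.mem_attachFin,
      Finset.mem_Ico]
  rw [this, Finset.card_attachFin, Nat.card_Ico]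
  have := take_sum_succ c k
  omega

lemma lamD_image (hn : 2 ≤ n) (c : List ℕ) (d : List ℤ) (hc : ∀ x ∈ c, 0 < x)
    (hd : ∀ x ∈ d, 0 < x) (hlen : c.length = d.length) (hsum : c.sum ≤ n / 2) :
    (Finset.univ.filter fun i : Fin n => lamD n c d i < 0).image (lamD n c d)
      = ((List.range d.length).map (fun k => -((d.drop k).sum))).toFinset := by
  apply Finset.ext
  intro v
  rw [Finset.mem_image, List.mem_toFinset, List.mem_map]
  constructor
  · rintro ⟨i, hi, rfl⟩
    simp only [Finset.mem_filter, Finset.mem_univ, true_and] at hi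
    have hiLt := i.isLt
    rcases Nat.lt_or_ge (i:ℕ) c.sum with hr1 | hr1
    · obtain ⟨k, hkm, h1, h2⟩ := exists_block (B := fun t => (c.take t).sum) (by simp)
        (show (i:ℕ) < (c.take c.length).sum by rw [take_sum_all c _ le_rfl]; omega)
      exact ⟨k, List.mem_range.mpr (by omega), (lamD_block hn c d hsum k i h1 h2).symm⟩
    · exfalso
      rcases Nat.lt_or_ge (i:ℕ) (n - c.sum) with hr2 | hr2
      · have := lamD_zero hn c d hsum i hr1 hr2
        omega
      · have := (lamD_pos_mirror hn c d hd hlen hsum i hr2).1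
        omega
  · rintro ⟨k, hkm, rfl⟩
    rw [List.mem_range] at hkm
    have hkc : k < c.length := by omega
    have hBlt : (c.take k).sum < (c.take (k+1)).sum := by
      have h1 := take_sum_succ c k
      have h2 := getD_posN c hc k hkc
      omega
    have hBle := take_sum_le_sum c (k+1)
    have hin : (c.take k).sum < n := by omega
    set i : Fin n := ⟨(c.take k).sum, hin⟩ with hidef
    have hval : lamD n c d i = -((d.drop k).sum) :=
      lamD_block hn c d hsum k i (by simp [hidef]) (by simp [hidef]; omega)
    refine ⟨i, ?_, hval⟩
    simp only [Finset.mem_filter, Finset.mem_univ, true_and]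
    rw [hval]
    exact vd_neg d hd k (by omega)

end PartC3
section PartC4

variable {n : ℕ}

lemma deltaNeg_getD (w : Equiv.Perm ℤ) (k : ℕ) (hk : k < (negVals n w).length) :
    (deltaNeg n w).getD k 0
      = (negVals n w).getD (k+1) 0 - (negVals n w).getD k 0 := by
  rw [List.getD_eq_getElem _ 0 (by rw [deltaNeg_length]; exact hk)]
  rw [deltaNeg_getElem n w k hk]
  have h1 : (negVals n w ++ [0])[k]'(by rw [List.length_append]; simp; omega)
      = (negVals n w).getD k 0 := by
    rw [List.getElem_append_left hk, List.getD_eq_getElem _ 0 hk]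
  have h2 : (negVals n w ++ [0])[k+1]'(by rw [List.length_append]; simp; omega)
      = (negVals n w).getD (k+1) 0 := by
    rcases Nat.lt_or_ge (k+1) (negVals n w).length with h | h
    · rw [List.getElem_append_left h, List.getD_eq_getElem _ 0 h]
    · have hk1 : k + 1 = (negVals n w).length := by omega
      rw [List.getElem_append_right (by omega),
        List.getD_eq_default (negVals n w) 0 (show (negVals n w).length ≤ k+1 by omega)]
      simp [hk1]
  rw [h1, h2]

lemma surj_data (hn : 2 ≤ n) (c : List ℕ) (d : List ℤ) (hc : ∀ x ∈ c, 0 < x)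
    (hd : ∀ x ∈ d, 0 < x) (hlen : c.length = d.length) (hsum : c.sum ≤ n / 2) :
    ∃ w ∈ OmegaSet n, muNeg n w = c ∧ deltaNeg n w = d := by
  obtain ⟨w, hw, hlam⟩ := omega_exists (lamD n c d) (lamD_mono c d hd)
    (lamD_antisym c d) (by omega) hn
  set Vl : List ℤ := (List.range d.length).map (fun k => -((d.drop k).sum)) with hVl
  have hVlen : Vl.length = d.length := by rw [hVl, List.length_map, List.length_range]
  have hVget : ∀ (k : ℕ) (hk : k < d.length), Vl[k]'(by omega) = -((d.drop k).sum) := by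
    intro k hk
    simp only [hVl, List.getElem_map, List.getElem_range]
  have hVsorted : List.Pairwise (· < ·) Vl := by
    apply List.pairwise_iff_getElem.mpr
    intro a b ha hb hab
    rw [hVget a (by omega), hVget b (by omega)]
    exact vd_strict_mono d hd a b hab (by omega)
  have hVnodup : Vl.Nodup := hVsorted.nodup
  have himg : negVals n w = Vl := by
    unfold negVals
    simp only [hlam]
    rw [lamD_image hn c d hc hd hlen hsum]
    exact (List.toFinset_sort (· ≤ ·) hVnodup).mpr (hVsorted.imp le_of_lt)
  have hmu : muNeg n w = c := by
    apply List.ext_getElem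
    · rw [muNeg_length, himg, hVlen, hlen]
    · intro k h1 h2
      have hkd : k < d.length := by omega
      simp only [muNeg, List.getElem_map]
      have hkV : k < (negVals n w).length := by rw [himg]; omega
      have hVk : (negVals n w)[k]'hkV = -((d.drop k).sum) := by
        rw [List.getElem_of_eq himg, hVget k hkd]
      rw [hVk]
      simp only [hlam]
      rw [lamD_block_filter hn c d hc hd hlen hsum k hkd,
        block_card hn c hsum k (by omega), List.getD_eq_getElem c 0 h2]
  have hdel : deltaNeg n w = d := by
    apply List.ext_getElem
    · rw [deltaNeg_length, himg, hVlen]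
    · intro k h1 h2
      have hkd : k < d.length := h2
      have hkV : k < (negVals n w).length := by rw [himg]; omega
      rw [deltaNeg_getElem n w k hkV]
      have hL : ∀ (j : ℕ) (hj : j ≤ d.length),
          (negVals n w ++ [0])[j]'(by rw [List.length_append, himg]; simp; omega)
            = -((d.drop j).sum) := by
        intro j hj
        rcases Nat.lt_or_ge j d.length with h | h
        · rw [List.getElem_append_left (by rw [himg]; omega), List.getElem_of_eq himg,
            hVget j h]
        · have hj' : j = d.length := by omega
          subst hj'
          rw [List.getElem_append_right (by rw [himg]; omega)]
          have hz := vd_zero_at_len d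
          simp only [himg, hVlen, List.length_map, List.length_range]
          simp only [List.getElem_singleton]  -- may need adjusting
          omega
      rw [hL (k+1) (by omega), hL k (by omega)]
      have hrec := drop_sum_succ d k hkd
      rw [List.getD_eq_getElem d 0 hkd] at hrec
      omega
  exact ⟨w, hw, hmu, hdel⟩

end PartC4

/-- Fix `n ≥ 2`, `m ≥ 0` and a sequence `c = (c_1, …, c_m)` of positive
integers with `c_1 + ⋯ + c_m ≤ ⌊n/2⌋`. Then `w ↦ δ⁻(w)` is a bijection from
`{w ∈ Ω_n : μ⁻(w) = c}` onto the set of all `m`-tuples of positive integers. -/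
theorem statement15 (n : ℕ) (hn : 2 ≤ n) (m : ℕ) (c : List ℕ)
    (hc : ∀ x ∈ c, 0 < x) (hlen : c.length = m) (hsum : c.sum ≤ n / 2) :
    Set.BijOn (deltaNeg n) {w | w ∈ OmegaSet n ∧ muNeg n w = c}
      {l : List ℤ | l.length = m ∧ ∀ x ∈ l, 0 < x} := by
  refine ⟨?_, ?_, ?_⟩
  · -- MapsTo
    rintro w ⟨hw, hmu⟩
    have hmV : (negVals n w).length = m := by
      rw [← muNeg_length, hmu, hlen]
    refine ⟨by rw [deltaNeg_length, hmV], ?_⟩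
    intro x hx
    obtain ⟨k, hk, hget⟩ := List.mem_iff_getElem.mp hx
    have hkV : k < (negVals n w).length := by
      rw [← deltaNeg_length]; exact hk
    rw [deltaNeg_getElem n w k hkV] at hget
    have hsort := List.pairwise_iff_getElem.mp (negVals_sorted n w)
    rcases Nat.lt_or_ge (k+1) (negVals n w).length with h | h
    · have e1 : (negVals n w ++ [0])[k]'(by rw [List.length_append]; simp; omega)
          = (negVals n w)[k]'hkV := List.getElem_append_left hkV
      have e2 : (negVals n w ++ [0])[k+1]'(by rw [List.length_append]; simp; omega)
          = (negVals n w)[k+1]'h := List.getElem_append_left h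
      rw [e1, e2] at hget
      have := hsort k (k+1) hkV h (by omega)
      omega
    · have hk1 : k + 1 = (negVals n w).length := by omega
      have e1 : (negVals n w ++ [0])[k]'(by rw [List.length_append]; simp; omega)
          = (negVals n w)[k]'hkV := List.getElem_append_left hkV
      have e2 : (negVals n w ++ [0])[k+1]'(by rw [List.length_append]; simp; omega)
          = (0:ℤ) := by
        rw [List.getElem_append_right (by omega)]
        simp [hk1]
      rw [e1, e2] at hget
      have := negVals_neg n w _ (List.getElem_mem hkV)
      omega
  · -- InjOn
    rintro w ⟨hw, hmu⟩ w' ⟨hw', hmu'⟩ heq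
    have hVlen : (negVals n w).length = (negVals n w').length := by
      rw [← muNeg_length, ← muNeg_length, hmu, hmu']
    have hkey : ∀ t k, k + t = (negVals n w).length →
        (negVals n w).getD k 0 = (negVals n w').getD k 0 := by
      intro t
      induction t with
      | zero =>
          intro k hk
          rw [List.getD_eq_default _ 0 (by omega), List.getD_eq_default _ 0 (by omega)]
      | succ t ih =>
          intro k hk
          have hkV : k < (negVals n w).length := by omega
          have hkV' : k < (negVals n w').length := by omega
          have hd1 := deltaNeg_getD w k hkV
          have hd2 := deltaNeg_getD w' k hkV'
          have hde : (deltaNeg n w).getD k 0 = (deltaNeg n w').getD k 0 := by rw [heq]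
          have ih' := ih (k+1) (by omega)
          omega
    have hVeq : negVals n w = negVals n w' := by
      apply List.ext_getElem hVlen
      intro k h1 h2
      have := hkey ((negVals n w).length - k) k (by omega)
      rw [List.getD_eq_getElem _ 0 h1, List.getD_eq_getElem _ 0 h2] at this
      exact this
    exact omega_lam_inj hn hw hw' (omega_lam_eq_of_data hn hw hw' hVeq (hmu.trans hmu'.symm))
  · -- SurjOn
    intro l hl
    obtain ⟨hlenl, hposl⟩ := hl
    obtain ⟨w, hw, hmu, hdel⟩ := surj_data hn c l hc hposl (by rw [hlen, hlenl]) hsum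
    exact ⟨w, ⟨hw, hmu⟩, hdel⟩
end

section
/- Fix a nonnegative integer k and let C_k be the set of all finite sequences of positive integers c = (c_1, …, c_m), of any length m ≥ 0, with c_1 + ⋯ + c_m = k (the compositions of k). Then, in the field of rational functions in two variables x and y over ℚ, Σ_{c ∈ C_k} Π(c; x, y) = (1/[k]_x!) · ∏_{i=1}^k 1/(x^i y − 1), where for c = (c_1,…,c_m) one sets b_i = c_1 + ⋯ + c_i and Π(c; x, y) = ∏_{i=1}^m ( 1/(x^{b_i²} y^{b_i} − 1) ) · ( x^{C(c_i,2)} / [c_i]_x! ), with C(a,2) = a(a−1)/2, and Π(c;x,y) = 1 for the empty sequence (so the identity reads 1 = 1 when k = 0). -/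
noncomputable section

/-- The field `ℚ(x, y)` of rational functions in two variables over `ℚ`. -/
abbrev K18 : Type _ := FractionRing (MvPolynomial (Fin 2) ℚ)

/-- The variable `x` of `ℚ(x, y)`. -/
def xK : K18 := algebraMap (MvPolynomial (Fin 2) ℚ) K18 (MvPolynomial.X 0)

/-- The variable `y` of `ℚ(x, y)`. -/
def yK : K18 := algebraMap (MvPolynomial (Fin 2) ℚ) K18 (MvPolynomial.X 1)

/-- The `q`-integer `[m]_x = 1 + x + ⋯ + x^{m−1}` in `ℚ(x, y)`. -/
def qIntK (m : ℕ) : K18 := ∑ i ∈ Finset.range m, xK ^ i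

/-- The `q`-factorial `[m]_x!` in `ℚ(x, y)`. -/
def qFactK (m : ℕ) : K18 := ∏ j ∈ Finset.range m, qIntK (j + 1)

/-! ### Nonvanishing lemmas -/

lemma algMap_ne_zero {p : MvPolynomial (Fin 2) ℚ} (hp : p ≠ 0) :
    algebraMap (MvPolynomial (Fin 2) ℚ) K18 p ≠ 0 := by
  simpa [IsFractionRing.to_map_eq_zero_iff] using hp

def ev18 : MvPolynomial (Fin 2) ℚ →+* ℚ :=
  MvPolynomial.eval (fun j : Fin 2 => if j = 0 then 1 else 2)

lemma xy_ne (a b : ℕ) (hb : 1 ≤ b) : xK ^ a * yK ^ b - 1 ≠ 0 := by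
  have h : xK ^ a * yK ^ b - 1 =
      algebraMap (MvPolynomial (Fin 2) ℚ) K18
        (MvPolynomial.X 0 ^ a * MvPolynomial.X 1 ^ b - 1) := by
    simp [xK, yK]
  rw [h]
  apply algMap_ne_zero
  intro hzero
  have h1 := congrArg ev18 hzero
  simp [ev18, MvPolynomial.eval_X] at h1
  have h2 : (1:ℚ) < 2 ^ b := one_lt_pow₀ (by norm_num) (by omega)
  nlinarith [h1, h2]

lemma qIntK_eq (m : ℕ) : qIntK m =
    algebraMap (MvPolynomial (Fin 2) ℚ) K18 (∑ i ∈ Finset.range m, MvPolynomial.X 0 ^ i) := by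
  simp [qIntK, xK, map_sum]

lemma qIntK_ne {m : ℕ} (hm : 1 ≤ m) : qIntK m ≠ 0 := by
  rw [qIntK_eq]
  apply algMap_ne_zero
  intro hzero
  have h1 := congrArg ev18 hzero
  simp [ev18, map_sum, MvPolynomial.eval_X] at h1
  have : (m:ℚ) = 0 := by simpa using h1
  exact_mod_cast absurd this (by exact_mod_cast Nat.cast_ne_zero.2 (by omega))

lemma qFactK_ne (m : ℕ) : qFactK m ≠ 0 := by
  unfold qFactK
  exact Finset.prod_ne_zero_iff.2 fun i _ => qIntK_ne (Nat.le_add_left 1 i)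

lemma xy1_ne (a : ℕ) : xK ^ a * yK - 1 ≠ 0 := by
  have := xy_ne a 1 le_rfl
  simpa using this

lemma prod_xy1_ne (s : Finset ℕ) : (∏ i ∈ s, (xK ^ i * yK - 1)) ≠ 0 :=
  Finset.prod_ne_zero_iff.2 fun i _ => xy1_ne i

/-! ### q-binomials and the Newton expansion -/

lemma qIntK_add (a b : ℕ) : qIntK (a + b) = qIntK a + xK ^ a * qIntK b := by
  unfold qIntK
  rw [Finset.sum_range_add, Finset.mul_sum]
  congr 1
  exact Finset.sum_congr rfl fun i _ => (pow_add xK a i)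

lemma qFactK_zero : qFactK 0 = 1 := by simp [qFactK]

lemma qFactK_succ (m : ℕ) : qFactK (m + 1) = qFactK m * qIntK (m + 1) := by
  unfold qFactK; rw [Finset.prod_range_succ]

def qBinomK (n j : ℕ) : K18 := qFactK n / (qFactK j * qFactK (n - j))

lemma qBinomK_zero (n : ℕ) : qBinomK n 0 = 1 := by
  unfold qBinomK
  rw [Nat.sub_zero, qFactK_zero, one_mul, div_self (qFactK_ne n)]

lemma qBinomK_self (n : ℕ) : qBinomK n n = 1 := by
  unfold qBinomK
  rw [Nat.sub_self, qFactK_zero, mul_one, div_self (qFactK_ne n)]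

lemma qBinomK_pascal {n j : ℕ} (h : j + 1 ≤ n) :
    qBinomK (n + 1) (j + 1) = qBinomK n j + xK ^ (j + 1) * qBinomK n (j + 1) := by
  have hb : n - j = (n - j - 1) + 1 := by omega
  have hb2 : n - (j + 1) = n - j - 1 := by omega
  have hsplit : qIntK (n + 1) = qIntK (j + 1) + xK ^ (j + 1) * qIntK (n - j) := by
    have : n + 1 = (j + 1) + (n - j) := by omega
    rw [this, qIntK_add]
  unfold qBinomK
  rw [Nat.succ_sub_succ, hb2, qFactK_succ, hsplit, hb, qFactK_succ (n - j - 1), qFactK_succ j]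
  rw [← hb]
  have h1 := qFactK_ne j
  have h2 := qFactK_ne (n - j - 1)
  have h3 := qIntK_ne (m := j + 1) (by omega)
  have h4 : qIntK (n - j) ≠ 0 := by rw [hb]; exact qIntK_ne (by omega)
  field_simp

lemma newton (k : ℕ) (z : K18) :
    ∑ j ∈ Finset.range (k + 1), qBinomK k j * ∏ s ∈ Finset.range j, (z - xK ^ s) = z ^ k := by
  induction k with
  | zero => simp [qBinomK_zero]
  | succ k ih =>
    set T : ℕ → K18 := fun j => ∏ s ∈ Finset.range j, (z - xK ^ s) with hT
    have expand : ∀ j : ℕ, z * T j = T (j + 1) + xK ^ j * T j := by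
      intro j
      simp only [hT, Finset.prod_range_succ]
      ring
    have key : ∑ j ∈ Finset.range (k + 2), qBinomK (k + 1) j * T j
        = ∑ j ∈ Finset.range k, (qBinomK k j * T (j+1) + xK ^ (j+1) * qBinomK k (j+1) * T (j+1))
          + T (k + 1) + 1 := by
      rw [Finset.sum_range_succ' (fun j => qBinomK (k + 1) j * T j) (k+1)]
      rw [Finset.sum_range_succ (fun j => qBinomK (k + 1) (j + 1) * T (j + 1)) k]
      rw [qBinomK_zero, qBinomK_self]
      have : ∀ j ∈ Finset.range k, qBinomK (k + 1) (j + 1) * T (j + 1)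
          = qBinomK k j * T (j+1) + xK ^ (j+1) * qBinomK k (j+1) * T (j+1) := by
        intro j hj
        rw [Finset.mem_range] at hj
        rw [qBinomK_pascal (by omega)]
        ring
      rw [Finset.sum_congr rfl this]
      simp [hT]
    have e1 : ∀ j ∈ Finset.range (k+1), z * (qBinomK k j * T j)
        = qBinomK k j * T (j+1) + xK ^ j * (qBinomK k j * T j) := by
      intro j _
      calc z * (qBinomK k j * T j) = qBinomK k j * (z * T j) := by ring
        _ = qBinomK k j * (T (j+1) + xK ^ j * T j) := by rw [expand j]
        _ = qBinomK k j * T (j+1) + xK ^ j * (qBinomK k j * T j) := by ring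
    have key2 : ∑ j ∈ Finset.range (k+1), z * (qBinomK k j * T j)
        = ∑ j ∈ Finset.range k, (qBinomK k j * T (j+1) + xK ^ (j+1) * qBinomK k (j+1) * T (j+1))
          + T (k+1) + 1 := by
      rw [Finset.sum_congr rfl e1, Finset.sum_add_distrib,
        Finset.sum_range_succ (fun j => qBinomK k j * T (j+1)) k,
        Finset.sum_range_succ' (fun j => xK ^ j * (qBinomK k j * T j)) k,
        qBinomK_self, qBinomK_zero]
      have e3 : ∑ j ∈ Finset.range k,
          (qBinomK k j * T (j+1) + xK ^ (j+1) * qBinomK k (j+1) * T (j+1))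
          = ∑ j ∈ Finset.range k, qBinomK k j * T (j+1)
            + ∑ j ∈ Finset.range k, xK ^ (j+1) * (qBinomK k (j+1) * T (j+1)) := by
        rw [Finset.sum_add_distrib]
        congr 1
        exact Finset.sum_congr rfl fun j _ => by ring
      rw [e3]
      simp [hT]
      ring
    rw [key, pow_succ', ← ih, Finset.mul_sum, key2]

/-! ### Compositions as lists -/

/-- The finset of block-lists of compositions of `k`. -/
def compBlocks (k : ℕ) : Finset (List ℕ) :=
  Finset.univ.image (fun c : Composition k => c.blocks)

lemma mem_compBlocks {k : ℕ} {l : List ℕ} :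
    l ∈ compBlocks k ↔ (∀ i ∈ l, 0 < i) ∧ l.sum = k := by
  constructor
  · rintro hl
    simp only [compBlocks, Finset.mem_image, Finset.mem_univ, true_and] at hl
    obtain ⟨c, rfl⟩ := hl
    exact ⟨fun i hi => c.blocks_pos hi, c.blocks_sum⟩
  · rintro ⟨h1, h2⟩
    simp only [compBlocks, Finset.mem_image, Finset.mem_univ, true_and]
    exact ⟨⟨l, fun {i} hi => h1 i hi, h2⟩, rfl⟩

lemma sum_comp_eq {k : ℕ} (f : List ℕ → K18) :
    ∑ c : Composition k, f c.blocks = ∑ l ∈ compBlocks k, f l := by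
  unfold compBlocks
  rw [Finset.sum_image]
  intro c _ c' _ h
  exact Composition.ext h

lemma compBlocks_zero : compBlocks 0 = {[]} := by
  ext l
  rw [mem_compBlocks, Finset.mem_singleton]
  constructor
  · rintro ⟨h1, h2⟩
    cases l with
    | nil => rfl
    | cons a t =>
      have := h1 a (by simp)
      simp [List.sum_cons] at h2
      omega
  · rintro rfl
    exact ⟨by simp, rfl⟩

lemma comp_rec (k : ℕ) (f : List ℕ → K18) :
    ∑ l ∈ compBlocks (k + 1), f l
      = ∑ p ∈ Finset.range (k + 1), ∑ l ∈ compBlocks p, f (l ++ [k + 1 - p]) := by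
  rw [Finset.sum_sigma' (Finset.range (k+1)) compBlocks
    (fun p l => f (l ++ [k + 1 - p]))]
  symm
  apply Finset.sum_nbij' (fun x : Σ _ : ℕ, List ℕ => x.2 ++ [k + 1 - x.1])
    (fun l => (⟨l.dropLast.sum, l.dropLast⟩ : Σ _ : ℕ, List ℕ))
  · rintro ⟨p, l⟩ hx
    rw [Finset.mem_sigma, Finset.mem_range] at hx
    obtain ⟨hp, hl⟩ := hx
    dsimp only at hp hl ⊢
    rw [mem_compBlocks] at hl ⊢
    constructor
    · intro i hi
      rw [List.mem_append] at hi
      rcases hi with hi | hi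
      · exact hl.1 i hi
      · simp at hi; omega
    · rw [List.sum_append, hl.2]
      simp; omega
  · intro l hl
    rw [mem_compBlocks] at hl
    have hne : l ≠ [] := by
      rintro rfl
      simp at hl
    have hsum : l.dropLast.sum + l.getLast hne = k + 1 := by
      conv_rhs => rw [← hl.2, ← List.dropLast_append_getLast hne]
      rw [List.sum_append]; simp
    have hpos : 0 < l.getLast hne := hl.1 _ (List.getLast_mem hne)
    rw [Finset.mem_sigma, Finset.mem_range, mem_compBlocks]
    dsimp only
    refine ⟨by omega, fun i hi => hl.1 i (List.dropLast_sublist l |>.subset hi), rfl⟩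
  · rintro ⟨p, l⟩ hx
    rw [Finset.mem_sigma, Finset.mem_range, mem_compBlocks] at hx
    simp only [List.dropLast_concat]
    exact congrArg (fun q => (⟨q, l⟩ : Σ _ : ℕ, List ℕ)) hx.2.2
  · intro l hl
    rw [mem_compBlocks] at hl
    have hne : l ≠ [] := by
      rintro rfl
      simp at hl
    have hsum : l.dropLast.sum + l.getLast hne = k + 1 := by
      conv_rhs => rw [← hl.2, ← List.dropLast_append_getLast hne]
      rw [List.sum_append]; simp
    simp only
    have : k + 1 - l.dropLast.sum = l.getLast hne := by omega
    rw [this, List.dropLast_append_getLast hne]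
  · rintro ⟨p, l⟩ _
    rfl

/-! ### The summand as a function of the block list -/

def Pfun (l : List ℕ) : K18 :=
  ∏ i ∈ Finset.range l.length,
    ((xK ^ ((l.take (i+1)).sum) ^ 2 * yK ^ ((l.take (i+1)).sum) - 1)⁻¹ *
      (xK ^ (l.getD i 0).choose 2 / qFactK (l.getD i 0)))

lemma Pfun_append (l : List ℕ) (j : ℕ) :
    Pfun (l ++ [j]) = Pfun l *
      ((xK ^ (l.sum + j) ^ 2 * yK ^ (l.sum + j) - 1)⁻¹ *
        (xK ^ j.choose 2 / qFactK j)) := by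
  unfold Pfun
  have hlen : (l ++ [j]).length = l.length + 1 := by simp
  rw [hlen, Finset.prod_range_succ]
  congr 1
  · apply Finset.prod_congr rfl
    intro i hi
    rw [Finset.mem_range] at hi
    rw [List.take_append_of_le_length (by omega), List.getD_append _ _ _ _ (by omega)]
  · have h1 : (l ++ [j]).take (l.length + 1) = l ++ [j] := List.take_of_length_le (by simp)
    have h2 : (l ++ [j]).getD l.length 0 = j := by
      rw [List.getD_append_right _ _ _ _ le_rfl]
      simp
    rw [h1, h2, List.sum_append]
    simp

/-! ### The key algebraic identity -/

lemma prodFactor (k : ℕ) : ∀ j, j ≤ k →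
    ∏ s ∈ Finset.range j, (xK ^ k * yK - xK ^ s)
      = xK ^ (j.choose 2) * ∏ i ∈ Finset.Ioc (k - j) k, (xK ^ i * yK - 1) := by
  intro j
  induction j with
  | zero => simp
  | succ j ihj =>
    intro hj
    rw [Finset.prod_range_succ, ihj (by omega)]
    have h1 : k - j = (k - (j+1)) + 1 := by omega
    have h2 : Finset.Ioc (k - (j+1)) k
        = Finset.Ioc (k - (j+1)) (k - j) ∪ Finset.Ioc (k - j) k := by
      rw [Finset.Ioc_union_Ioc_eq_Ioc (by omega) (by omega)]
    have h3 : Finset.Ioc (k - (j+1)) (k - j) = {k - j} := by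
      rw [h1]
      exact Nat.Ioc_succ_singleton _
    have h4 : ∏ i ∈ Finset.Ioc (k - (j+1)) k, (xK ^ i * yK - 1)
        = (xK ^ (k - j) * yK - 1) * ∏ i ∈ Finset.Ioc (k - j) k, (xK ^ i * yK - 1) := by
      rw [h2, Finset.prod_union, h3, Finset.prod_singleton]
      rw [h3]
      simp [Finset.disjoint_left]
    have h5 : xK ^ k * yK - xK ^ j = xK ^ j * (xK ^ (k - j) * yK - 1) := by
      rw [mul_sub, mul_one, ← mul_assoc, ← pow_add]
      congr 3
      omega
    have h6 : (j+1).choose 2 = j.choose 2 + j := by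
      rw [Nat.choose_succ_succ]
      simp [Nat.choose_one_right]
      omega
    rw [h4, h5, h6, pow_add]
    ring

lemma keyA (k : ℕ) (hk : 1 ≤ k) :
    ∑ p ∈ Finset.range k, qBinomK k (k - p) * xK ^ ((k - p).choose 2) *
        ∏ i ∈ Finset.Ioc p k, (xK ^ i * yK - 1)
      = xK ^ (k ^ 2) * yK ^ k - 1 := by
  clear hk
  have hre := Finset.sum_range_reflect (fun j => qBinomK k (j + 1) * xK ^ ((j+1).choose 2) *
    ∏ i ∈ Finset.Ioc (k - (j+1)) k, (xK ^ i * yK - 1)) k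
  have hl : ∑ p ∈ Finset.range k, qBinomK k (k - p) * xK ^ ((k - p).choose 2) *
        ∏ i ∈ Finset.Ioc p k, (xK ^ i * yK - 1)
      = ∑ j ∈ Finset.range k, (fun j => qBinomK k (j + 1) * xK ^ ((j+1).choose 2) *
        ∏ i ∈ Finset.Ioc (k - (j+1)) k, (xK ^ i * yK - 1)) (k - 1 - j) := by
    apply Finset.sum_congr rfl
    intro p hp
    rw [Finset.mem_range] at hp
    simp only
    have e1 : k - 1 - p + 1 = k - p := by omega
    have e2 : k - (k - p) = p := by omega
    rw [e1, e2]
  rw [hl, hre]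
  have hr : ∑ j ∈ Finset.range k, qBinomK k (j + 1) * xK ^ ((j+1).choose 2) *
        ∏ i ∈ Finset.Ioc (k - (j+1)) k, (xK ^ i * yK - 1)
      = ∑ j ∈ Finset.range k, qBinomK k (j + 1) *
        ∏ s ∈ Finset.range (j+1), (xK ^ k * yK - xK ^ s) := by
    apply Finset.sum_congr rfl
    intro j hj
    rw [Finset.mem_range] at hj
    rw [prodFactor k (j+1) (by omega)]
    ring
  rw [hr]
  have hnewt := newton k (xK ^ k * yK)
  rw [Finset.sum_range_succ' (fun j => qBinomK k j * ∏ s ∈ Finset.range j,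
    (xK ^ k * yK - xK ^ s)) k] at hnewt
  simp only [qBinomK_zero, Finset.range_zero, Finset.prod_empty, mul_one, one_mul] at hnewt
  have hz : (xK ^ k * yK) ^ k = xK ^ (k ^ 2) * yK ^ k := by
    rw [mul_pow, ← pow_mul, ← pow_two]
  rw [hz] at hnewt
  linear_combination hnewt

set_option maxHeartbeats 2000000 in
lemma termEq (k p : ℕ) (hp : p < k) :
    ((qFactK p)⁻¹ * ∏ i ∈ Finset.Icc 1 p, (xK ^ i * yK - 1)⁻¹) *
        ((xK ^ (k ^ 2) * yK ^ k - 1)⁻¹ * (xK ^ ((k - p).choose 2) / qFactK (k - p)))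
      = ((qFactK k)⁻¹ * ∏ i ∈ Finset.Icc 1 k, (xK ^ i * yK - 1)⁻¹) *
          (xK ^ (k ^ 2) * yK ^ k - 1)⁻¹ *
          (qBinomK k (k - p) * xK ^ ((k - p).choose 2) *
            ∏ i ∈ Finset.Ioc p k, (xK ^ i * yK - 1)) := by
  have hIcc : ∀ n : ℕ, Finset.Icc 1 n = Finset.Ioc 0 n := fun n => by
    rw [← Finset.Icc_add_one_left_eq_Ioc]; rfl
  rw [hIcc, hIcc]
  have hsplit : (∏ i ∈ Finset.Ioc 0 k, (xK ^ i * yK - 1))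
      = (∏ i ∈ Finset.Ioc 0 p, (xK ^ i * yK - 1)) * ∏ i ∈ Finset.Ioc p k, (xK ^ i * yK - 1) :=
    (Finset.prod_Ioc_consecutive _ (Nat.zero_le p) hp.le).symm
  have hinv : ∀ s : Finset ℕ, (∏ i ∈ s, (xK ^ i * yK - 1)⁻¹)
      = (∏ i ∈ s, (xK ^ i * yK - 1))⁻¹ := fun s => Finset.prod_inv_distrib _
  rw [hinv, hinv, hsplit]
  unfold qBinomK
  rw [Nat.sub_sub_self hp.le]
  have h1 := qFactK_ne p
  have h2 := qFactK_ne k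
  have h3 := qFactK_ne (k - p)
  have h4 := xy_ne (k ^ 2) k (by omega)
  have h5 := prod_xy1_ne (Finset.Ioc 0 p)
  have h6 := prod_xy1_ne (Finset.Ioc p k)
  field_simp
  have e : ∀ s : Finset ℕ, ∏ x ∈ s, (yK * xK ^ x - 1) = ∏ x ∈ s, (xK ^ x * yK - 1) :=
    fun s => Finset.prod_congr rfl fun x _ => by ring
  rw [e, e, eq_div_iff (mul_ne_zero h5 h6)]
  ring

/-! ### Main theorem -/

set_option maxHeartbeats 2000000 in
theorem mainlist (k : ℕ) : ∑ l ∈ compBlocks k, Pfun l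
    = (qFactK k)⁻¹ * ∏ i ∈ Finset.Icc 1 k, (xK ^ i * yK - 1)⁻¹ := by
  induction k using Nat.strong_induction_on with
  | _ k ih =>
    match k with
    | 0 =>
      rw [compBlocks_zero]
      simp [Pfun, qFactK]
    | (m + 1) =>
      rw [comp_rec m Pfun]
      have hstep : ∀ p ∈ Finset.range (m+1),
          ∑ l ∈ compBlocks p, Pfun (l ++ [m + 1 - p])
          = ((qFactK p)⁻¹ * ∏ i ∈ Finset.Icc 1 p, (xK ^ i * yK - 1)⁻¹) *
              ((xK ^ ((m+1) ^ 2) * yK ^ (m+1) - 1)⁻¹ *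
                (xK ^ ((m + 1 - p).choose 2) / qFactK (m + 1 - p))) := by
        intro p hp
        rw [Finset.mem_range] at hp
        have hterm : ∀ l ∈ compBlocks p, Pfun (l ++ [m + 1 - p])
            = Pfun l * ((xK ^ ((m+1) ^ 2) * yK ^ (m+1) - 1)⁻¹ *
                (xK ^ ((m + 1 - p).choose 2) / qFactK (m + 1 - p))) := by
          intro l hl
          rw [Pfun_append, (mem_compBlocks.1 hl).2]
          have he : p + (m + 1 - p) = m + 1 := by omega
          rw [he]
        rw [Finset.sum_congr rfl hterm, ← Finset.sum_mul, ih p (by omega)]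
      rw [Finset.sum_congr rfl hstep]
      rw [Finset.sum_congr rfl
        (fun p hp => termEq (m+1) p (Finset.mem_range.1 hp))]
      rw [← Finset.mul_sum, keyA (m+1) (by omega)]
      rw [mul_assoc, inv_mul_cancel₀ (xy_ne ((m+1) ^ 2) (m+1) (by omega)), mul_one]

/-- Fix `k ≥ 0` and let `C_k` be the set of compositions
`c = (c_1, …, c_m)` of `k` (sequences of positive integers of any length `m ≥ 0` with sum `k`).
Then, in `ℚ(x, y)`,
`∑_{c ∈ C_k} Π(c; x, y) = (1/[k]_x!) ∏_{i=1}^k 1/(x^i y − 1)`, where, with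
`b_i = c_1 + ⋯ + c_i`,
`Π(c; x, y) = ∏_{i=1}^m (1/(x^{b_i²} y^{b_i} − 1)) (x^{C(c_i,2)}/[c_i]_x!)`
(and `Π(c; x, y) = 1` for the empty composition, so the identity reads `1 = 1` when `k = 0`). -/
theorem statement18 (k : ℕ) :
    ∑ c : Composition k,
        ∏ i ∈ Finset.range c.length,
          ((xK ^ (c.sizeUpTo (i + 1)) ^ 2 * yK ^ c.sizeUpTo (i + 1) - 1)⁻¹ *
            (xK ^ (c.blocks.getD i 0).choose 2 / qFactK (c.blocks.getD i 0))) =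
      (qFactK k)⁻¹ * ∏ i ∈ Finset.Icc 1 k, (xK ^ i * yK - 1)⁻¹ := by
  rw [← mainlist k, ← sum_comp_eq Pfun]
  apply Finset.sum_congr rfl
  intro c _
  rfl

end
end
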